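/- arXiv:1811.08181 — 2 statements merged into one kernel-verified Lean document; each statement's English description precedes it below -/
import Mathlib

section
/- For every hypergraph H with hw(H) ≤ 2, it holds that ghw(H) = hw(H); in particular, if hw(H) = 2 then ghw(H) = 2. -/
/-- A hypergraph: a finite set of vertices and a finite set of nonempty edges,
each of which is a subset of the vertex set. -/
structure Hypergraph' (V : Type) where
  verts : Finset V
  edges : Finset (Finset V)
  nonempty_of_mem : ∀ e ∈ edges, e.Nonempty
  subset_verts : ∀ e ∈ edges, e ⊆ verts

variable {V : Type} [DecidableEq V]

/-- The data of a (generalized) hypertree decomposition: a finite rooted tree together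
with a bag `B_u` and an (integral) edge labelling `λ_u` (given as the finite set of edges
with value 1) for each node. -/
structure Decomp (V : Type) where
  n : ℕ
  tree : SimpleGraph (Fin n)
  root : Fin n
  bag : Fin n → Finset V
  cover : Fin n → Finset (Finset V)

/-- `u'` lies in the subtree `T_u` rooted at `u`: every path from the root to `u'`
passes through `u`. -/
def Decomp.desc (D : Decomp V) (u u' : Fin D.n) : Prop :=
  ∀ p : D.tree.Path D.root u', u ∈ p.1.support

/-- `D` is a generalized hypertree decomposition (GHD) of `H`:
the tree is a tree, every edge is covered by some bag, the set of nodes containing a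
given vertex is connected in the tree, each `λ_u` uses only edges of `H`, and
`B_u ⊆ B(λ_u)`. -/
def Decomp.IsGHD (H : Hypergraph' V) (D : Decomp V) : Prop :=
  D.tree.IsTree ∧
  (∀ e ∈ H.edges, ∃ u, e ⊆ D.bag u) ∧
  (∀ v : V, (D.tree.induce {u | v ∈ D.bag u}).Preconnected) ∧
  (∀ u, D.cover u ⊆ H.edges) ∧
  (∀ u, D.bag u ⊆ (D.cover u).biUnion id)

/-- `D` is a hypertree decomposition (HD) of `H`: a GHD satisfying in addition the
special condition `V(T_u) ∩ B(λ_u) ⊆ B_u` for every node `u`. -/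
def Decomp.IsHD (H : Hypergraph' V) (D : Decomp V) : Prop :=
  D.IsGHD H ∧
  ∀ u u', D.desc u u' → ∀ v ∈ D.bag u', v ∈ (D.cover u).biUnion id → v ∈ D.bag u

/-- The generalized hypertree width of `H`: the least `k` such that `H` has a GHD all of
whose labels `λ_u` have weight (cardinality) at most `k`. -/
noncomputable def ghw (H : Hypergraph' V) : ℕ :=
  sInf {k | ∃ D : Decomp V, D.IsGHD H ∧ ∀ u, (D.cover u).card ≤ k}

/-- The hypertree width of `H`: the least `k` such that `H` has an HD all of whose
labels `λ_u` have weight (cardinality) at most `k`. -/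
noncomputable def hw (H : Hypergraph' V) : ℕ :=
  sInf {k | ∃ D : Decomp V, D.IsHD H ∧ ∀ u, (D.cover u).card ≤ k}


namespace GHW
variable {V : Type} [DecidableEq V]

structure PF (V : Type) [DecidableEq V] where
  n : ℕ
  r : Fin n
  par : Fin n → Fin n
  hr : par r = r
  hanc : ∀ i, ∃ k, par^[k] i = r
  bag : Fin n → Finset V
  cover : Fin n → Finset (Finset V)

namespace PF
variable (P : PF V)

def anc (i j : Fin P.n) : Prop := ∃ k, P.par^[k] j = i

lemma anc_refl (i : Fin P.n) : P.anc i i := ⟨0, rfl⟩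

lemma iterate_r (k : ℕ) : P.par^[k] P.r = P.r := by
  induction k with
  | zero => rfl
  | succ k ih => rw [Function.iterate_succ_apply', ih, P.hr]

lemma anc_r (i : Fin P.n) : P.anc P.r i := ⟨(P.hanc i).choose, (P.hanc i).choose_spec⟩

lemma anc_trans {i j k : Fin P.n} (h1 : P.anc i j) (h2 : P.anc j k) : P.anc i k := by
  obtain ⟨a, ha⟩ := h1; obtain ⟨b, hb⟩ := h2
  exact ⟨a + b, by rw [Function.iterate_add_apply, hb, ha]⟩

noncomputable def dep (i : Fin P.n) : ℕ := Nat.find (P.hanc i)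

lemma iterate_dep (i : Fin P.n) : P.par^[P.dep i] i = P.r := Nat.find_spec (P.hanc i)

lemma dep_le {i : Fin P.n} {k : ℕ} (h : P.par^[k] i = P.r) : P.dep i ≤ k :=
  Nat.find_le h

@[simp] lemma dep_eq_zero_iff {i : Fin P.n} : P.dep i = 0 ↔ i = P.r := by
  constructor
  · intro h
    have := P.iterate_dep i
    rwa [h] at this
  · rintro rfl
    exact Nat.le_zero.mp (P.dep_le (by rfl))

lemma dep_par {i : Fin P.n} (h : i ≠ P.r) : P.dep (P.par i) + 1 = P.dep i := by
  have hpos : 0 < P.dep i := Nat.pos_of_ne_zero (fun hc => h (P.dep_eq_zero_iff.mp hc))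
  have h1 : P.dep (P.par i) ≤ P.dep i - 1 := by
    apply P.dep_le
    have := P.iterate_dep i
    rwa [show P.dep i = (P.dep i - 1) + 1 by omega, Function.iterate_succ_apply] at this
  have h2 : P.dep i ≤ P.dep (P.par i) + 1 := by
    apply P.dep_le
    rw [Function.iterate_succ_apply]
    exact P.iterate_dep (P.par i)
  omega

lemma dep_par_lt {i : Fin P.n} (h : i ≠ P.r) : P.dep (P.par i) < P.dep i := by
  have := P.dep_par h; omega

lemma dep_iterate (k : ℕ) (j : Fin P.n) :
    P.par^[k] j = P.r ∨ P.dep (P.par^[k] j) + k ≤ P.dep j := by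
  induction k with
  | zero => exact Or.inr (by simpa using Nat.le_refl _)
  | succ k ih =>
    rw [Function.iterate_succ_apply']
    rcases ih with h | h
    · exact Or.inl (by rw [h, P.hr])
    · by_cases hr : P.par^[k] j = P.r
      · exact Or.inl (by rw [hr, P.hr])
      · right
        have := P.dep_par hr
        omega

lemma dep_lt_of_anc {i j : Fin P.n} (h : P.anc i j) (hne : i ≠ j) : P.dep i < P.dep j := by
  obtain ⟨k, hk⟩ := h
  have hk0 : k ≠ 0 := by rintro rfl; exact hne hk.symm
  have hjr : j ≠ P.r := by
    rintro rfl
    exact hne (by rw [← hk, P.iterate_r])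
  rcases P.dep_iterate k j with h | h
  · rw [hk] at h
    have h1 : P.dep i = 0 := P.dep_eq_zero_iff.mpr h
    have h2 : P.dep j ≠ 0 := fun hc => hjr (P.dep_eq_zero_iff.mp hc)
    omega
  · rw [hk] at h
    omega

lemma anc_antisymm {i j : Fin P.n} (h1 : P.anc i j) (h2 : P.anc j i) : i = j := by
  by_contra hne
  have := P.dep_lt_of_anc h1 hne
  have := P.dep_lt_of_anc h2 (Ne.symm hne)
  omega

lemma anc_par (i : Fin P.n) : P.anc (P.par i) i := ⟨1, rfl⟩

lemma par_ne_self {i : Fin P.n} (h : i ≠ P.r) : P.par i ≠ i := by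
  intro hc
  obtain ⟨k, hk⟩ := P.hanc i
  have hfix : ∀ m, P.par^[m] i = i := by
    intro m
    induction m with
    | zero => rfl
    | succ m ih => rw [Function.iterate_succ_apply', ih, hc]
  rw [hfix k] at hk
  exact h hk

end PF
end GHW


namespace GHW
variable {V : Type} [DecidableEq V]
namespace PF
variable (P : PF V)

def graph (P : PF V) : SimpleGraph (Fin P.n) := SimpleGraph.fromRel (fun a b => P.par a = b)

lemma graph_adj {a b : Fin P.n} : P.graph.Adj a b ↔ a ≠ b ∧ (P.par a = b ∨ P.par b = a) := by
  simp [graph, SimpleGraph.fromRel_adj]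

lemma adj_par {i : Fin P.n} (h : i ≠ P.r) : P.graph.Adj i (P.par i) := by
  rw [graph_adj]
  exact ⟨(P.par_ne_self h).symm, Or.inl rfl⟩

lemma reachable_r : ∀ (i : Fin P.n), P.graph.Reachable i P.r := by
  have key : ∀ (N : ℕ) (i : Fin P.n), P.dep i ≤ N → P.graph.Reachable i P.r := by
    intro N
    induction N with
    | zero =>
      intro i h
      have : i = P.r := P.dep_eq_zero_iff.mp (Nat.le_zero.mp h)
      exact this ▸ SimpleGraph.Reachable.refl _
    | succ N ih =>
      intro i h
      by_cases hir : i = P.r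
      · exact hir ▸ SimpleGraph.Reachable.refl _
      · refine (P.adj_par hir).reachable.trans (ih _ ?_)
        have := P.dep_par hir
        omega
  intro i
  exact key (P.dep i) i le_rfl

lemma graph_connected : P.graph.Connected := by
  have : Nonempty (Fin P.n) := ⟨P.r⟩
  rw [SimpleGraph.connected_iff]
  refine ⟨fun a b => (P.reachable_r a).trans (P.reachable_r b).symm, this⟩

lemma adj_dep {a b : Fin P.n} (h : P.graph.Adj a b) (hba : P.dep b ≤ P.dep a) :
    P.par a = b := by
  rw [graph_adj] at h
  rcases h.2 with h1 | h1
  · exact h1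
  · exfalso
    have hbr : b ≠ P.r := by
      rintro rfl
      rw [P.hr] at h1
      exact h.1 h1.symm
    have := P.dep_par hbr
    rw [h1] at this
    omega

lemma graph_acyclic : P.graph.IsAcyclic := by
  intro a c hc
  have hsne : c.support ≠ [] := SimpleGraph.Walk.support_ne_nil c
  have hsne' : c.support.toFinset.Nonempty := by
    simpa [List.toFinset_eq_empty_iff] using hsne
  obtain ⟨m, hm_mem, hm_max⟩ := c.support.toFinset.exists_max_image P.dep hsne'
  rw [List.mem_toFinset] at hm_mem
  have hmax : ∀ x ∈ c.support, P.dep x ≤ P.dep m := by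
    intro x hx; exact hm_max x (List.mem_toFinset.mpr hx)
  set c' := c.rotate m hm_mem with hc'def
  have hc' : c'.IsCycle := hc.rotate hm_mem
  have hsupp : ∀ x, x ∈ c'.support → P.dep x ≤ P.dep m := by
    intro x hx
    rw [SimpleGraph.Walk.mem_support_iff] at hx
    rcases hx with rfl | hx
    · exact le_rfl
    · exact hmax x (List.mem_of_mem_tail
        (((SimpleGraph.Walk.support_rotate c m hm_mem).mem_iff).mp hx))
  have hlen3 : 3 ≤ c'.length := hc'.three_le_length
  have hnn : ¬ c'.Nil := by
    rw [SimpleGraph.Walk.not_nil_iff_lt_length]; omega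
  obtain ⟨x, hadjx, q, hq⟩ := SimpleGraph.Walk.not_nil_iff.mp hnn
  have hnnr : ¬ c'.reverse.Nil := by
    rw [SimpleGraph.Walk.not_nil_iff_lt_length, SimpleGraph.Walk.length_reverse]; omega
  obtain ⟨y, hadjy, q2, hq2⟩ := SimpleGraph.Walk.not_nil_iff.mp hnnr
  -- x = par m
  have hx_mem : x ∈ c'.support := by
    rw [hq]
    simp [SimpleGraph.Walk.support_cons]
  have hy_mem : y ∈ c'.support := by
    have : y ∈ c'.reverse.support := by
      rw [hq2]; simp [SimpleGraph.Walk.support_cons]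
    rwa [SimpleGraph.Walk.support_reverse, List.mem_reverse] at this
  have hx : P.par m = x := P.adj_dep hadjx (hsupp x hx_mem)
  have hy : P.par m = y := P.adj_dep hadjy (hsupp y hy_mem)
  have hxy : x = y := hx ▸ hy
  -- edges manipulation
  have hedges1 : c'.edges = s(m, x) :: q.edges := by rw [hq]; simp
  have hedges2 : c'.edges.reverse = s(m, y) :: q2.edges := by
    rw [← SimpleGraph.Walk.edges_reverse, hq2]; simp
  have hedges3 : c'.edges = q2.edges.reverse ++ [s(m, y)] := by
    have := congrArg List.reverse hedges2
    rwa [List.reverse_reverse, List.reverse_cons] at this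
  have hnodup : c'.edges.Nodup := hc'.edges_nodup
  rw [hedges1] at hedges3 hnodup
  cases hrev : q2.edges.reverse with
  | nil =>
    rw [hrev] at hedges3
    simp only [List.nil_append] at hedges3
    have hq0 : q.edges = [] := by
      injection hedges3 with h1 h2
    have hlen1 : c'.length = 1 := by
      rw [← SimpleGraph.Walk.length_edges, hedges1, hq0]
      rfl
    omega
  | cons f E1' =>
    rw [hrev, List.cons_append] at hedges3
    injection hedges3 with h1 h2
    rw [List.nodup_cons] at hnodup
    apply hnodup.1
    rw [h2, hxy]
    simp

lemma graph_isTree : P.graph.IsTree := ⟨P.graph_connected, P.graph_acyclic⟩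

end PF

/-- The generalized hypertree decomposition conditions, in parent-map form. -/
def PF.IsG (H : Hypergraph' V) (P : PF V) : Prop :=
  (∀ e ∈ H.edges, ∃ u, e ⊆ P.bag u) ∧
  (∀ (v : V) (i : Fin P.n), v ∈ P.bag i →
      v ∈ P.bag (P.par i) ∨ ∀ j, v ∈ P.bag j → P.anc i j) ∧
  (∀ u, P.cover u ⊆ H.edges) ∧
  (∀ u, P.bag u ⊆ (P.cover u).biUnion id)

/-- Join form : each bag equals the union of its cover. -/
def PF.Join (P : PF V) : Prop := ∀ u, P.bag u = (P.cover u).biUnion id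

namespace PF
variable (P : PF V)

lemma induce_preconnected {H : Hypergraph' V} (hG : P.IsG H) (v : V) :
    (P.graph.induce {u | v ∈ P.bag u}).Preconnected := by
  set S : Set (Fin P.n) := {u | v ∈ P.bag u} with hS
  have key : ∀ (N : ℕ) (a b : Fin P.n) (ha : v ∈ P.bag a) (hb : v ∈ P.bag b),
      P.dep a + P.dep b ≤ N →
      (P.graph.induce S).Reachable ⟨a, ha⟩ ⟨b, hb⟩ := by
    intro N
    induction N with
    | zero =>
      intro a b ha hb hN
      have ha0 : a = P.r := P.dep_eq_zero_iff.mp (by omega)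
      have hb0 : b = P.r := P.dep_eq_zero_iff.mp (by omega)
      subst ha0; subst hb0
      rfl
    | succ N ih =>
      intro a b ha hb hN
      by_cases hab : a = b
      · subst hab; rfl
      · by_cases hstepa : a ≠ P.r ∧ v ∈ P.bag (P.par a)
        · -- move a up
          have hadj : (P.graph.induce S).Adj ⟨a, ha⟩ ⟨P.par a, hstepa.2⟩ :=
            P.adj_par hstepa.1
          refine hadj.reachable.trans (ih (P.par a) b hstepa.2 hb ?_)
          have := P.dep_par hstepa.1
          omega
        · have htopa : ∀ j, v ∈ P.bag j → P.anc a j := by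
            by_cases har : a = P.r
            · intro j _; exact har ▸ P.anc_r j
            · rcases (hG.2.1 v a ha) with h | h
              · exact absurd ⟨har, h⟩ hstepa
              · exact h
          by_cases hstepb : b ≠ P.r ∧ v ∈ P.bag (P.par b)
          · have hadj : (P.graph.induce S).Adj ⟨b, hb⟩ ⟨P.par b, hstepb.2⟩ :=
              P.adj_par hstepb.1
            refine (ih a (P.par b) ha hstepb.2 ?_).trans hadj.reachable.symm
            have := P.dep_par hstepb.1
            omega
          · have htopb : ∀ j, v ∈ P.bag j → P.anc b j := by
              by_cases hbr : b = P.r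
              · intro j _; exact hbr ▸ P.anc_r j
              · rcases (hG.2.1 v b hb) with h | h
                · exact absurd ⟨hbr, h⟩ hstepb
                · exact h
            exact absurd (P.anc_antisymm (htopa b hb) (htopb a ha)) hab
  intro a b
  exact key (P.dep a.1 + P.dep b.1) a.1 b.1 a.2 b.2 le_rfl

def toDecomp (P : PF V) : Decomp V := ⟨P.n, P.graph, P.r, P.bag, P.cover⟩

theorem toDecomp_isHD {H : Hypergraph' V} (hG : P.IsG H) (hj : P.Join) :
    P.toDecomp.IsHD H := by
  refine ⟨⟨P.graph_isTree, hG.1, fun v => P.induce_preconnected hG v, hG.2.2.1, hG.2.2.2⟩, ?_⟩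
  intro u u' _ v _ hv
  show v ∈ P.bag u
  rw [hj u]
  exact hv

end PF
end GHW


namespace GHW
variable {V : Type} [DecidableEq V]

open SimpleGraph Walk in
theorem exists_pf (H : Hypergraph' V) (D : Decomp V) (hGHD : D.IsGHD H) (k : ℕ)
    (hk : ∀ u, (D.cover u).card ≤ k) :
    ∃ P : PF V, P.IsG H ∧ ∀ u, (P.cover u).card ≤ k := by
  classical
  obtain ⟨hT, hcov, hconn, hcsub, hbsub⟩ := hGHD
  have huniq := (SimpleGraph.isTree_iff_existsUnique_path.mp hT).2
  set G := D.tree with hGdef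
  set r := D.root with hrdef
  let pth : ∀ a b : Fin D.n, G.Walk a b := fun a b => (huniq a b).exists.choose
  have hpath : ∀ a b, (pth a b).IsPath := fun a b => (huniq a b).exists.choose_spec
  have hpuniq : ∀ a b (q : G.Walk a b), q.IsPath → q = pth a b := fun a b q hq =>
    (huniq a b).unique hq (hpath a b)
  let par : Fin D.n → Fin D.n := fun a => (pth a r).getVert 1
  have hnil_r : (SimpleGraph.Walk.nil : G.Walk r r) = pth r r :=
    hpuniq r r _ SimpleGraph.Walk.IsPath.nil
  have hparr : par r = r := by
    show (pth r r).getVert 1 = r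
    rw [← hnil_r]
    rfl
  have hlen_pos : ∀ a, a ≠ r → 0 < (pth a r).length := by
    intro a ha
    rcases Nat.eq_zero_or_pos (pth a r).length with h | h
    · exact absurd (SimpleGraph.Walk.eq_of_length_eq_zero h) ha
    · exact h
  have hadj_par : ∀ a, a ≠ r → G.Adj a (par a) := by
    intro a ha
    have := SimpleGraph.Walk.adj_getVert_succ (pth a r) (hlen_pos a ha) (i := 0)
    simpa using this
  have hnnil : ∀ a, a ≠ r → ¬ (pth a r).Nil := by
    intro a ha
    rw [SimpleGraph.Walk.not_nil_iff_lt_length]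
    exact hlen_pos a ha
  have htail : ∀ a (ha : a ≠ r), (pth a r).tail = (pth (par a) r).copy rfl rfl := by
    intro a ha
    have h1 : (pth a r).tail.IsPath := (hpath a r).tail
    have := hpuniq (par a) r ((pth a r).tail) h1
    simpa using this
  have hdep : ∀ a, a ≠ r → (pth (par a) r).length + 1 = (pth a r).length := by
    intro a ha
    have := SimpleGraph.Walk.length_tail_add_one (hnnil a ha)
    rw [htail a ha] at this
    simpa using this
  have hanc : ∀ i : Fin D.n, ∃ k, par^[k] i = r := by
    have key : ∀ (N : ℕ) (i : Fin D.n), (pth i r).length ≤ N → ∃ k, par^[k] i = r := by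
      intro N
      induction N with
      | zero =>
        intro i h
        exact ⟨0, SimpleGraph.Walk.eq_of_length_eq_zero (Nat.le_zero.mp h)⟩
      | succ N ih =>
        intro i h
        by_cases hir : i = r
        · exact ⟨0, hir⟩
        · obtain ⟨k, hk⟩ := ih (par i) (by have := hdep i hir; omega)
          exact ⟨k + 1, by rw [Function.iterate_succ_apply, hk]⟩
    intro i
    exact key (pth i r).length i le_rfl
  -- every edge of the tree is a parent edge
  have edge_lemma : ∀ a b, G.Adj a b → par a = b ∨ par b = a := by
    intro a b hab
    by_cases hmem : a ∈ (pth b r).support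
    · right
      have hq : ((pth b r).takeUntil a hmem).IsPath := (hpath b r).takeUntil hmem
      have h1 : (SimpleGraph.Walk.cons hab.symm SimpleGraph.Walk.nil : G.Walk b a).IsPath := by
        simp [SimpleGraph.Walk.cons_isPath_iff, hab.ne']
      have heq : (pth b r).takeUntil a hmem = SimpleGraph.Walk.cons hab.symm SimpleGraph.Walk.nil := by
        rw [hpuniq b a _ hq, hpuniq b a _ h1]
      have hspec := (pth b r).take_spec hmem
      show (pth b r).getVert 1 = a
      rw [← hspec, heq]
      simp [SimpleGraph.Walk.cons_append, SimpleGraph.Walk.getVert_cons_succ,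
        SimpleGraph.Walk.getVert_zero]
    · left
      have hcons : (SimpleGraph.Walk.cons hab (pth b r)).IsPath :=
        (hpath b r).cons hmem
      have := hpuniq a r _ hcons
      show (pth a r).getVert 1 = b
      rw [← this]
      simp
  -- the key path lemma
  have M : ∀ (i j : Fin D.n) (W : G.Walk i j), W.IsPath →
      s(i, par i) ∉ W.edges → ∃ k, par^[k] j = i := by
    intro i j W
    induction W with
    | nil => exact fun _ _ => ⟨0, rfl⟩
    | @cons i x j hadj W' ih =>
      intro hp he
      have hxi : par x = i := by
        rcases edge_lemma i x hadj with h | h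
        · exfalso
          apply he
          rw [h]
          simp [SimpleGraph.Walk.edges_cons]
        · exact h
      have hW'p : W'.IsPath := hp.of_cons
      have hinot : i ∉ W'.support := by
        have := SimpleGraph.Walk.cons_isPath_iff hadj W'
        exact (this.mp hp).2
      have hx_edge : s(x, par x) ∉ W'.edges := by
        rw [hxi]
        intro hmem
        exact hinot (SimpleGraph.Walk.snd_mem_support_of_mem_edges W' hmem)
      obtain ⟨k, hk⟩ := ih hW'p hx_edge
      exact ⟨k + 1, by rw [Function.iterate_succ_apply', hk, hxi]⟩
  -- connectivity in parent form
  have hconn' : ∀ (v : V) (i : Fin D.n), v ∈ D.bag i →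
      v ∈ D.bag (par i) ∨ ∀ j, v ∈ D.bag j → ∃ k, par^[k] j = i := by
    intro v i hi
    by_cases htop : ∀ j, v ∈ D.bag j → ∃ k, par^[k] j = i
    · exact Or.inr htop
    · left
      push_neg at htop
      obtain ⟨j, hj, hnk⟩ := htop
      have hreach := hconn v ⟨i, hi⟩ ⟨j, hj⟩
      obtain ⟨w⟩ := hreach
      let W0 := w.map (SimpleGraph.Embedding.induce {u | v ∈ D.bag u}).toHom
      have hW0supp : ∀ x, x ∈ W0.support → v ∈ D.bag x := by
        intro x hx
        rw [SimpleGraph.Walk.support_map] at hx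
        obtain ⟨y, _, rfl⟩ := List.mem_map.mp hx
        exact y.2
      have hbp : W0.bypass.IsPath := SimpleGraph.Walk.bypass_isPath W0
      have hbsupp : ∀ x, x ∈ W0.bypass.support → v ∈ D.bag x := fun x hx =>
        hW0supp x (SimpleGraph.Walk.support_bypass_subset W0 hx)
      by_cases hedge : s(i, par i) ∈ W0.bypass.edges
      · exact hbsupp (par i) (SimpleGraph.Walk.snd_mem_support_of_mem_edges _ hedge)
      · obtain ⟨k', hk'⟩ := M i j W0.bypass hbp hedge
        exact absurd hk' (hnk k')
  refine ⟨⟨D.n, r, par, hparr, hanc, D.bag, D.cover⟩, ⟨hcov, ?_, hcsub, hbsub⟩, hk⟩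
  intro v i hi
  exact hconn' v i hi
end GHW


namespace GHW
variable {V : Type} [DecidableEq V]
namespace PF

def attachPar (P : PF V) (w0 : Fin P.n) : Fin (P.n + 1) → Fin (P.n + 1) :=
  fun i => if h : i = Fin.last P.n then w0.castSucc else (P.par (i.castPred h)).castSucc

lemma castSucc_ne_last' (n : ℕ) (i : Fin n) : (i.castSucc : Fin (n + 1)) ≠ Fin.last n :=
  Fin.ne_of_lt (Fin.castSucc_lt_last _)

@[simp] lemma attachPar_castSucc (P : PF V) (w0 i : Fin P.n) :
    P.attachPar w0 i.castSucc = (P.par i).castSucc := by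
  simp [attachPar, dif_neg (castSucc_ne_last' P.n i)]

@[simp] lemma attachPar_last (P : PF V) (w0 : Fin P.n) :
    P.attachPar w0 (Fin.last P.n) = w0.castSucc := by
  simp [attachPar]

lemma attachPar_iterate (P : PF V) (w0 : Fin P.n) (k : ℕ) (i : Fin P.n) :
    (P.attachPar w0)^[k] i.castSucc = (P.par^[k] i).castSucc := by
  induction k generalizing i with
  | zero => rfl
  | succ k ih =>
    rw [Function.iterate_succ_apply, attachPar_castSucc, ih]
    rfl

def attach (P : PF V) (w0 : Fin P.n) (b : Finset V) (c : Finset (Finset V)) : PF V where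
  n := P.n + 1
  r := P.r.castSucc
  par := P.attachPar w0
  hr := by
    rw [attachPar_castSucc, P.hr]
  hanc := by
    intro i
    by_cases h : i = Fin.last P.n
    · subst h
      obtain ⟨k, hk⟩ := P.hanc w0
      refine ⟨k + 1, ?_⟩
      rw [Function.iterate_succ_apply, attachPar_last, attachPar_iterate, hk]
    · obtain ⟨k, hk⟩ := P.hanc (i.castPred h)
      refine ⟨k, ?_⟩
      conv_lhs => rw [← Fin.castSucc_castPred i h]
      rw [attachPar_iterate, hk]
  bag := fun i => if h : i = Fin.last P.n then b else P.bag (i.castPred h)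
  cover := fun i => if h : i = Fin.last P.n then c else P.cover (i.castPred h)

variable (P : PF V) (w0 : Fin P.n) (b : Finset V) (c : Finset (Finset V))

lemma castSucc_ne_last (i : Fin P.n) : (i.castSucc : Fin (P.n + 1)) ≠ Fin.last P.n :=
  Fin.ne_of_lt (Fin.castSucc_lt_last _)

@[simp] lemma attach_bag_castSucc (i : Fin P.n) :
    (P.attach w0 b c).bag i.castSucc = P.bag i := by
  simp [attach, dif_neg (P.castSucc_ne_last i)]

@[simp] lemma attach_bag_last : (P.attach w0 b c).bag (Fin.last P.n) = b := by
  simp [attach]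

@[simp] lemma attach_cover_castSucc (i : Fin P.n) :
    (P.attach w0 b c).cover i.castSucc = P.cover i := by
  simp [attach, dif_neg (P.castSucc_ne_last i)]

@[simp] lemma attach_cover_last : (P.attach w0 b c).cover (Fin.last P.n) = c := by
  simp [attach]

@[simp] lemma attach_par_castSucc (i : Fin P.n) :
    (P.attach w0 b c).par i.castSucc = (P.par i).castSucc := by
  simp [attach]

@[simp] lemma attach_par_last : (P.attach w0 b c).par (Fin.last P.n) = w0.castSucc := by
  simp [attach]

lemma attach_iterate (k : ℕ) (i : Fin P.n) :
    (P.attach w0 b c).par^[k] i.castSucc = (P.par^[k] i).castSucc :=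
  P.attachPar_iterate w0 k i

lemma attach_anc_of_anc {i j : Fin P.n} (h : P.anc i j) :
    (P.attach w0 b c).anc i.castSucc j.castSucc := by
  obtain ⟨k, hk⟩ := h
  exact ⟨k, by rw [attach_iterate, hk]⟩

lemma attach_anc_last {i : Fin P.n} (h : P.anc i w0) :
    (P.attach w0 b c).anc i.castSucc (Fin.last P.n) := by
  obtain ⟨k, hk⟩ := h
  refine ⟨k + 1, ?_⟩
  show (P.attachPar w0)^[k + 1] (Fin.last P.n) = i.castSucc
  rw [Function.iterate_succ_apply, attachPar_last, attachPar_iterate, hk]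

/-- The main attachment lemma: attaching a leaf with bag `enew` and cover `{enew}`. -/
theorem attach_isG {H H' : Hypergraph' V} (hP : P.IsG H') (hj : P.Join)
    (hw : ∀ u, (P.cover u).card ≤ 1)
    (hsub : H'.edges ⊆ H.edges) {enew : Finset V} (henew : enew ∈ H.edges)
    (hall : ∀ f ∈ H.edges, f = enew ∨ f ∈ H'.edges)
    (hcond : ∀ x ∈ enew, (∀ w, x ∉ P.bag w) ∨ x ∈ P.bag w0) :
    (P.attach w0 enew {enew}).IsG H ∧ (P.attach w0 enew {enew}).Join ∧
      (∀ u, ((P.attach w0 enew {enew}).cover u).card ≤ 1) := by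
  set Q := P.attach w0 enew {enew} with hQ
  have hbag : ∀ i : Fin (P.n + 1), Q.bag i = if h : i = Fin.last P.n then enew else P.bag (i.castPred h) := fun i => rfl
  refine ⟨⟨?_, ?_, ?_, ?_⟩, ?_, ?_⟩
  · -- coverage
    intro e he
    rcases hall e he with rfl | he'
    · exact ⟨Fin.last P.n, by rw [show Q.bag (Fin.last P.n) = e from P.attach_bag_last w0 e {e}]⟩
    · obtain ⟨u, hu⟩ := hP.1 e he'
      exact ⟨u.castSucc, by rwa [show Q.bag u.castSucc = P.bag u from P.attach_bag_castSucc w0 enew {enew} u]⟩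
  · -- connectivity
    intro v i hvi
    induction i using Fin.lastCases with
    | last =>
      rw [P.attach_bag_last] at hvi
      rcases hcond v hvi with hnone | hw0
      · right
        intro j hvj
        induction j using Fin.lastCases with
        | last => exact Q.anc_refl _
        | cast j =>
          rw [P.attach_bag_castSucc] at hvj
          exact absurd hvj (hnone j)
      · left
        rw [P.attach_par_last, P.attach_bag_castSucc]
        exact hw0
    | cast i =>
      rw [P.attach_bag_castSucc] at hvi
      rcases hP.2.1 v i hvi with hpar | htop
      · left
        rw [P.attach_par_castSucc, P.attach_bag_castSucc]
        exact hpar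
      · right
        intro j hvj
        induction j using Fin.lastCases with
        | last =>
          rw [P.attach_bag_last] at hvj
          rcases hcond v hvj with hnone | hw0
          · exact absurd hvi (hnone i)
          · exact P.attach_anc_last w0 _ _ (htop w0 hw0)
        | cast j =>
          rw [P.attach_bag_castSucc] at hvj
          exact P.attach_anc_of_anc w0 _ _ (htop j hvj)
  · -- covers in edges
    intro u
    induction u using Fin.lastCases with
    | last =>
      rw [P.attach_cover_last]
      simpa using henew
    | cast u =>
      rw [P.attach_cover_castSucc]
      exact (hP.2.2.1 u).trans hsub
  · -- bag subset of union
    intro u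
    induction u using Fin.lastCases with
    | last =>
      rw [P.attach_cover_last, P.attach_bag_last]
      simp
    | cast u =>
      rw [P.attach_cover_castSucc, P.attach_bag_castSucc]
      exact hP.2.2.2 u
  · -- join
    intro u
    induction u using Fin.lastCases with
    | last =>
      rw [P.attach_cover_last, P.attach_bag_last]
      simp
    | cast u =>
      rw [P.attach_cover_castSucc, P.attach_bag_castSucc]
      exact hj u
  · -- width
    intro u
    induction u using Fin.lastCases with
    | last =>
      rw [P.attach_cover_last]
      simp
    | cast u =>
      rw [P.attach_cover_castSucc]
      exact hw u

end PF
end GHW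


namespace GHW
variable {V : Type} [DecidableEq V]

namespace PF

/-- measure for the induction -/
def mu (H : Hypergraph' V) (P : PF V) : ℕ :=
  (∑ e ∈ H.edges, (e.card + 1)) + ∑ u : Fin P.n, ((P.bag u).card + (P.cover u).card)

/-- single node decomposition -/
def single (b : Finset V) (c : Finset (Finset V)) : PF V :=
  ⟨1, 0, id, rfl, fun i => ⟨0, Subsingleton.elim _ _⟩, fun _ => b, fun _ => c⟩

lemma single_empty (H : Hypergraph' V) (hE : H.edges = ∅) :
    (single (V := V) ∅ ∅).IsG H ∧ (single (V := V) ∅ ∅).Join ∧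
      ∀ u, ((single (V := V) ∅ ∅).cover u).card ≤ 1 := by
  refine ⟨⟨?_, ?_, ?_, ?_⟩, ?_, ?_⟩
  · intro e he; rw [hE] at he; exact absurd he (Finset.notMem_empty e)
  · intro v i hv; exact absurd hv (Finset.notMem_empty v)
  · intro u; exact Finset.empty_subset _
  · intro u; exact Finset.empty_subset _
  · intro u; simp [single]
  · intro u; simp [single]

lemma single_one (H : Hypergraph' V) {g : Finset V} (hg : g ∈ H.edges)
    (hall : ∀ e ∈ H.edges, e = g) :
    (single g {g}).IsG H ∧ (single g {g}).Join ∧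
      ∀ u, ((single g {g}).cover u).card ≤ 1 := by
  refine ⟨⟨?_, ?_, ?_, ?_⟩, ?_, ?_⟩
  · intro e he
    refine ⟨(0 : Fin 1), ?_⟩
    rw [hall e he]
    exact subset_rfl
  · intro v i hv
    left
    exact hv
  · intro u
    simpa [single] using hg
  · intro u; simp [single]
  · intro u; simp [single]
  · intro u; simp [single]

lemma not_mem_bag_of_not_mem_edges {H' : Hypergraph' V} {Q : PF V} (hQ : Q.IsG H')
    (hjQ : Q.Join) {x : V} (hx : ∀ g ∈ H'.edges, x ∉ g) : ∀ w, x ∉ Q.bag w := by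
  intro w hw
  rw [hjQ w] at hw
  obtain ⟨g, hg, hxg⟩ := Finset.mem_biUnion.mp hw
  exact hx g (hQ.2.2.1 w hg) hxg

@[reducible] def reb (P : PF V) (b : Fin P.n → Finset V) (c : Fin P.n → Finset (Finset V)) : PF V :=
  ⟨P.n, P.r, P.par, P.hr, P.hanc, b, c⟩

@[simp] lemma reb_bag (P : PF V) (b) (c) : (P.reb b c).bag = b := rfl
@[simp] lemma reb_cover (P : PF V) (b) (c) : (P.reb b c).cover = c := rfl
@[simp] lemma reb_par (P : PF V) (b) (c) : (P.reb b c).par = P.par := rfl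
@[simp] lemma reb_r (P : PF V) (b) (c) : (P.reb b c).r = P.r := rfl
lemma reb_anc (P : PF V) (b) (c) {i j : Fin P.n} : (P.reb b c).anc i j ↔ P.anc i j := Iff.rfl

theorem main_w1 (N : ℕ) : ∀ (H : Hypergraph' V) (P : PF V), mu H P ≤ N → P.IsG H →
    (∀ u, (P.cover u).card ≤ 1) →
    ∃ Q : PF V, Q.IsG H ∧ Q.Join ∧ ∀ u, (Q.cover u).card ≤ 1 := by
  induction N with
  | zero =>
    intro H P hmu hP _
    have hE : H.edges = ∅ := by
      by_contra hne
      obtain ⟨e, he⟩ := Finset.nonempty_iff_ne_empty.mpr hne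
      have h1 : e.card + 1 ≤ ∑ e ∈ H.edges, (e.card + 1) := Finset.single_le_sum (f := fun e => e.card + 1) (fun i _ => Nat.zero_le _) he
      have h2 : mu H P = 0 := Nat.le_zero.mp hmu
      simp only [mu] at h2
      omega
    exact ⟨_, single_empty H hE⟩
  | succ N ih =>
    intro H P hmu hP hw
    by_cases hcont : ∃ e ∈ H.edges, ∃ f ∈ H.edges, e ≠ f ∧ e ⊆ f
    · -- CASE A : edge containment
      obtain ⟨e, he, f, hf, hne, hef⟩ := hcont
      have hfH' : f ∈ H.edges.erase e := Finset.mem_erase.mpr ⟨Ne.symm hne, hf⟩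
      set H' : Hypergraph' V := ⟨H.verts, H.edges.erase e,
        fun g hg => H.nonempty_of_mem g (Finset.mem_of_mem_erase hg),
        fun g hg => H.subset_verts g (Finset.mem_of_mem_erase hg)⟩ with hH'
      set P' : PF V := P.reb P.bag
        (fun u => (P.cover u).image (fun g => if g = e then f else g)) with hP'def
      have hP'G : P'.IsG H' := by
        refine ⟨?_, ?_, ?_, ?_⟩
        · intro g hg
          exact hP.1 g (Finset.mem_of_mem_erase hg)
        · exact hP.2.1
        · intro u g hg
          rw [show P'.cover u = (P.cover u).image (fun g => if g = e then f else g) from rfl] at hg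
          obtain ⟨g0, hg0, rfl⟩ := Finset.mem_image.mp hg
          by_cases h : g0 = e
          · rw [if_pos h]; exact hfH'
          · rw [if_neg h]; exact Finset.mem_erase.mpr ⟨h, hP.2.2.1 u hg0⟩
        · intro u x hx
          obtain ⟨g0, hg0, hxg0⟩ := Finset.mem_biUnion.mp (hP.2.2.2 u hx)
          rw [show P'.cover u = (P.cover u).image (fun g => if g = e then f else g) from rfl]
          refine Finset.mem_biUnion.mpr ⟨if g0 = e then f else g0,
            Finset.mem_image_of_mem _ hg0, ?_⟩
          by_cases h : g0 = e
          · rw [if_pos h]; exact hef (h ▸ hxg0)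
          · rw [if_neg h]; exact hxg0
      have hw' : ∀ u, (P'.cover u).card ≤ 1 := fun u => Finset.card_image_le.trans (hw u)
      have hmu' : mu H' P' ≤ N := by
        have h1 : ∑ g ∈ H.edges.erase e, (g.card + 1) + (e.card + 1)
            = ∑ g ∈ H.edges, (g.card + 1) := Finset.sum_erase_add _ _ he
        have h3 : (∑ u : Fin P'.n, ((P'.bag u).card + (P'.cover u).card))
            ≤ ∑ u : Fin P.n, ((P.bag u).card + (P.cover u).card) := by
          refine Finset.sum_le_sum (fun u _ => ?_)
          have h4 : (P'.cover u).card ≤ (P.cover u).card := Finset.card_image_le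
          have h5 : (P'.bag u).card = (P.bag u).card := rfl
          omega
        simp only [mu, H'] at hmu ⊢
        omega
      obtain ⟨Q', hQ'G, hQ'j, hQ'w⟩ := ih H' P' hmu' hP'G hw'
      obtain ⟨w0, hw0⟩ := hQ'G.1 f hfH'
      have hres := Q'.attach_isG w0 hQ'G hQ'j hQ'w (Finset.erase_subset _ _) he
        (fun g hg => by
          by_cases hge : g = e
          · exact Or.inl hge
          · exact Or.inr (Finset.mem_erase.mpr ⟨hge, hg⟩))
        (fun x hx => Or.inr (hw0 (hef hx)))
      exact ⟨_, hres.1, hres.2.1, hres.2.2⟩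
    · have hanti : ∀ e ∈ H.edges, ∀ f ∈ H.edges, e ⊆ f → e = f := by
        intro e he f hf hsub
        by_contra hne
        exact hcont ⟨e, he, f, hf, hne, hsub⟩
      by_cases hact : ∃ u : Fin P.n, P.bag u ≠ ∅ ∨ P.cover u ≠ ∅
      · obtain ⟨u0, hu0⟩ := hact
        set A : Finset (Fin P.n) :=
          Finset.univ.filter (fun u : Fin P.n => P.bag u ≠ ∅ ∨ P.cover u ≠ ∅) with hA
        have hAne : A.Nonempty := ⟨u0, by simp [hA, hu0]⟩
        obtain ⟨u, huA, humax⟩ := A.exists_max_image P.dep hAne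
        have humax' : ∀ w : Fin P.n, (P.bag w ≠ ∅ ∨ P.cover w ≠ ∅) → P.dep w ≤ P.dep u := by
          intro w hww
          exact humax w (by simp [hA, hww])
        by_cases hur : u = P.r
        · -- CASE B1 : only the root is active
          have honly : ∀ w : Fin P.n, w ≠ u → P.bag w = ∅ ∧ P.cover w = ∅ := by
            intro w hwne
            by_contra hcon
            rw [not_and_or] at hcon
            have : P.bag w ≠ ∅ ∨ P.cover w ≠ ∅ := hcon
            have h1 := humax' w this
            rw [hur] at h1
            have h2 : P.dep P.r = 0 := P.dep_eq_zero_iff.mpr rfl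
            have : w = P.r := P.dep_eq_zero_iff.mp (by omega)
            exact hwne (this.trans hur.symm)
          by_cases hE : H.edges = ∅
          · exact ⟨_, single_empty H hE⟩
          · obtain ⟨e0, he0⟩ := Finset.nonempty_iff_ne_empty.mpr hE
            have hcovu : ∀ e ∈ H.edges, e ⊆ P.bag u := by
              intro e he
              obtain ⟨w, hwc⟩ := hP.1 e he
              by_cases hwu : w = u
              · exact hwu ▸ hwc
              · exfalso
                have := (honly w hwu).1
                rw [this] at hwc
                obtain ⟨x, hx⟩ := H.nonempty_of_mem e he
                exact Finset.notMem_empty x (hwc hx)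
            -- bag u nonempty, so cover u = {g}
            have hbne : P.bag u ≠ ∅ := by
              intro hbe
              obtain ⟨x, hx⟩ := H.nonempty_of_mem e0 he0
              exact Finset.notMem_empty x (hbe ▸ hcovu e0 he0 hx)
            obtain ⟨g, hgcov⟩ : ∃ g, P.cover u = {g} := by
              have h1 : (P.cover u).Nonempty := by
                obtain ⟨x, hx⟩ := Finset.nonempty_iff_ne_empty.mpr hbne
                have := hP.2.2.2 u hx
                obtain ⟨g, hg, _⟩ := Finset.mem_biUnion.mp this
                exact ⟨g, hg⟩
              have h2 := hw u
              have h3 : (P.cover u).card = 1 := le_antisymm h2 (Finset.card_pos.mpr h1)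
              exact Finset.card_eq_one.mp h3
            have hg_mem : g ∈ H.edges := hP.2.2.1 u (by rw [hgcov]; exact Finset.mem_singleton_self g)
            have hbg : P.bag u ⊆ g := by
              intro x hx
              have := hP.2.2.2 u hx
              rw [hgcov] at this
              simpa using this
            have hallg : ∀ e ∈ H.edges, e = g := fun e he =>
              hanti e he g hg_mem ((hcovu e he).trans hbg)
            exact ⟨_, single_one H hg_mem hallg⟩
        · -- u is not the root
          by_cases hbsub : P.bag u ⊆ P.bag (P.par u)
          · -- CASE B2a : ghost the node u
            have hpu_ne : P.par u ≠ u := P.par_ne_self hur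
            set P' : PF V := P.reb (fun w => if w = u then ∅ else P.bag w)
              (fun w => if w = u then ∅ else P.cover w) with hP'def
            have hbag' : ∀ w, P'.bag w = if w = u then ∅ else P.bag w := fun _ => rfl
            have hcov' : ∀ w, P'.cover w = if w = u then ∅ else P.cover w := fun _ => rfl
            have hP'G : P'.IsG H := by
              refine ⟨?_, ?_, ?_, ?_⟩
              · intro g hg
                obtain ⟨w, hwc⟩ := hP.1 g hg
                by_cases hwu : w = u
                · refine ⟨P.par u, ?_⟩
                  rw [hbag', if_neg hpu_ne]
                  exact (hwu ▸ hwc).trans hbsub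
                · exact ⟨w, by rw [hbag', if_neg hwu]; exact hwc⟩
              · intro x i hxi
                rw [hbag'] at hxi
                have hiu : i ≠ u := by
                  intro h
                  rw [if_pos h] at hxi
                  exact Finset.notMem_empty x hxi
                rw [if_neg hiu] at hxi
                rcases hP.2.1 x i hxi with hL | htop
                · left
                  rw [show P'.par i = P.par i from rfl, hbag']
                  have hpiu : P.par i ≠ u := by
                    intro hpi
                    have hir : i ≠ P.r := by
                      intro h
                      rw [h, P.hr] at hpi
                      exact hur hpi.symm
                    have h1 := P.dep_par hir
                    have h2 := humax' i (Or.inl (by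
                      intro hbe
                      rw [hbe] at hxi
                      exact Finset.notMem_empty x hxi))
                    rw [hpi] at h1
                    omega
                  rw [if_neg hpiu]
                  exact hL
                · right
                  intro j hj
                  rw [hbag'] at hj
                  have hju : j ≠ u := by
                    intro h
                    rw [if_pos h] at hj
                    exact Finset.notMem_empty x hj
                  rw [if_neg hju] at hj
                  exact htop j hj
              · intro w g hg
                rw [hcov'] at hg
                by_cases hwu : w = u
                · rw [if_pos hwu] at hg
                  exact absurd hg (Finset.notMem_empty g)
                · rw [if_neg hwu] at hg
                  exact hP.2.2.1 w hg
              · intro w x hx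
                rw [hbag'] at hx
                rw [hcov']
                by_cases hwu : w = u
                · rw [if_pos hwu] at hx
                  exact absurd hx (Finset.notMem_empty x)
                · rw [if_neg hwu] at hx ⊢
                  exact hP.2.2.2 w hx
            have hw' : ∀ w, (P'.cover w).card ≤ 1 := by
              intro w
              rw [hcov']
              by_cases hwu : w = u
              · rw [if_pos hwu]; simp
              · rw [if_neg hwu]; exact hw w
            have hmu' : mu H P' ≤ N := by
              have hactive : P.bag u ≠ ∅ ∨ P.cover u ≠ ∅ := (Finset.mem_filter.mp huA).2
              have hstrict : (∑ w : Fin P'.n, ((P'.bag w).card + (P'.cover w).card))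
                  < ∑ w : Fin P.n, ((P.bag w).card + (P.cover w).card) := by
                refine Finset.sum_lt_sum (fun w _ => ?_) ⟨u, Finset.mem_univ u, ?_⟩
                · rw [hbag', hcov']
                  by_cases hwu : w = u
                  · rw [if_pos hwu, if_pos hwu]; simp
                  · rw [if_neg hwu, if_neg hwu]
                · rw [hbag', hcov', if_pos rfl, if_pos rfl]
                  have hb0 : (∅ : Finset V).card = 0 := rfl
                  have hc0 : (∅ : Finset (Finset V)).card = 0 := rfl
                  rcases hactive with h | h
                  · have := Finset.card_pos.mpr (Finset.nonempty_iff_ne_empty.mpr h)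
                    omega
                  · have := Finset.card_pos.mpr (Finset.nonempty_iff_ne_empty.mpr h)
                    omega
              simp only [mu] at hmu ⊢
              omega
            exact ih H P' hmu' hP'G hw'
          · -- CASE B2b : private vertex
            obtain ⟨v, hvu, hvpu⟩ := Finset.not_subset.mp hbsub
            have hSv : ∀ j, v ∈ P.bag j → j = u := by
              rcases hP.2.1 v u hvu with h | htop
              · exact absurd h hvpu
              · intro j hj
                by_contra hju
                have h1 := P.dep_lt_of_anc (htop j hj) (Ne.symm hju)
                have h2 := humax' j (Or.inl (by
                  intro hbe
                  rw [hbe] at hj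
                  exact Finset.notMem_empty v hj))
                omega
            obtain ⟨eu, heucov⟩ : ∃ eu, P.cover u = {eu} := by
              have h1 : (P.cover u).Nonempty := by
                have := hP.2.2.2 u hvu
                obtain ⟨g, hg, _⟩ := Finset.mem_biUnion.mp this
                exact ⟨g, hg⟩
              exact Finset.card_eq_one.mp (le_antisymm (hw u) (Finset.card_pos.mpr h1))
            have heu_mem : eu ∈ H.edges :=
              hP.2.2.1 u (by rw [heucov]; exact Finset.mem_singleton_self eu)
            have hbag_sub_eu : P.bag u ⊆ eu := by
              intro x hx
              have := hP.2.2.2 u hx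
              rw [heucov] at this
              simpa using this
            have hveu : v ∈ eu := hbag_sub_eu hvu
            have hvedge : ∀ f ∈ H.edges, v ∈ f → f = eu := by
              intro f hfm hvf
              obtain ⟨w, hwc⟩ := hP.1 f hfm
              have hwu : w = u := hSv w (hwc hvf)
              subst hwu
              exact hanti f hfm eu heu_mem (hwc.trans hbag_sub_eu)
            have hbag_eu : P.bag u = eu := by
              apply le_antisymm hbag_sub_eu
              obtain ⟨w, hwc⟩ := hP.1 eu heu_mem
              have hwu : w = u := hSv w (hwc hveu)
              exact hwu ▸ hwc
            set e' := eu.erase v with he'def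
            by_cases he' : e' = ∅
            · -- CASE i : eu = {v}
              have heu_v : eu = {v} := by
                apply Finset.Subset.antisymm
                · intro x hx
                  rw [Finset.mem_singleton]
                  by_contra hxv
                  have : x ∈ e' := Finset.mem_erase.mpr ⟨hxv, hx⟩
                  rw [he'] at this
                  exact Finset.notMem_empty x this
                · rw [Finset.singleton_subset_iff]; exact hveu
              set H' : Hypergraph' V := ⟨H.verts, H.edges.erase eu,
                fun g hg => H.nonempty_of_mem g (Finset.mem_of_mem_erase hg),
                fun g hg => H.subset_verts g (Finset.mem_of_mem_erase hg)⟩ with hH'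
              set P' : PF V := P.reb (fun w => (P.bag w).erase v)
                (fun w => (P.cover w).erase eu) with hP'def
              have hbag' : ∀ w, P'.bag w = (P.bag w).erase v := fun _ => rfl
              have hcov' : ∀ w, P'.cover w = (P.cover w).erase eu := fun _ => rfl
              have hP'G : P'.IsG H' := by
                refine ⟨?_, ?_, ?_, ?_⟩
                · intro g hg
                  have hgH : g ∈ H.edges := Finset.mem_of_mem_erase hg
                  have hgne : g ≠ eu := (Finset.mem_erase.mp hg).1
                  obtain ⟨w, hwc⟩ := hP.1 g hgH
                  refine ⟨w, ?_⟩
                  rw [hbag']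
                  intro x hx
                  refine Finset.mem_erase.mpr ⟨?_, hwc hx⟩
                  rintro rfl
                  exact hgne (hvedge g hgH hx)
                · intro x i hxi
                  rw [hbag'] at hxi
                  obtain ⟨hxv, hxi'⟩ := Finset.mem_erase.mp hxi
                  rcases hP.2.1 x i hxi' with hL | htop
                  · left
                    rw [show P'.par i = P.par i from rfl, hbag']
                    exact Finset.mem_erase.mpr ⟨hxv, hL⟩
                  · right
                    intro j hj
                    rw [hbag'] at hj
                    exact htop j (Finset.mem_erase.mp hj).2
                · intro w g hg
                  rw [hcov'] at hg
                  obtain ⟨hgne, hgm⟩ := Finset.mem_erase.mp hg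
                  exact Finset.mem_erase.mpr ⟨hgne, hP.2.2.1 w hgm⟩
                · intro w x hx
                  rw [hbag'] at hx
                  obtain ⟨hxv, hxb⟩ := Finset.mem_erase.mp hx
                  obtain ⟨g0, hg0, hxg0⟩ := Finset.mem_biUnion.mp (hP.2.2.2 w hxb)
                  rw [hcov']
                  refine Finset.mem_biUnion.mpr ⟨g0, Finset.mem_erase.mpr ⟨?_, hg0⟩, hxg0⟩
                  rintro rfl
                  rw [heu_v] at hxg0
                  exact hxv (Finset.mem_singleton.mp hxg0)
              have hw' : ∀ w, (P'.cover w).card ≤ 1 := fun w => by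
                rw [hcov']; exact Finset.card_erase_le.trans (hw w)
              have hmu' : mu H' P' ≤ N := by
                have h1 : ∑ g ∈ H.edges.erase eu, (g.card + 1) + (eu.card + 1)
                    = ∑ g ∈ H.edges, (g.card + 1) := Finset.sum_erase_add _ _ heu_mem
                have h3 : (∑ w : Fin P'.n, ((P'.bag w).card + (P'.cover w).card))
                    ≤ ∑ w : Fin P.n, ((P.bag w).card + (P.cover w).card) := by
                  refine Finset.sum_le_sum (fun w _ => ?_)
                  have h4 : (P'.cover w).card ≤ (P.cover w).card := Finset.card_erase_le
                  have h5 : (P'.bag w).card ≤ (P.bag w).card := Finset.card_erase_le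
                  omega
                simp only [mu, H'] at hmu ⊢
                omega
              obtain ⟨Q', hQ'G, hQ'j, hQ'w⟩ := ih H' P' hmu' hP'G hw'
              have hvnot : ∀ w, v ∉ Q'.bag w := by
                refine not_mem_bag_of_not_mem_edges hQ'G hQ'j (fun g hg hvg => ?_)
                exact (Finset.mem_erase.mp hg).1 (hvedge g (Finset.mem_of_mem_erase hg) hvg)
              have hres := Q'.attach_isG Q'.r hQ'G hQ'j hQ'w (Finset.erase_subset _ _) heu_mem
                (fun g hg => by
                  by_cases hge : g = eu
                  · exact Or.inl hge
                  · exact Or.inr (Finset.mem_erase.mpr ⟨hge, hg⟩))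
                (fun x hx => by
                  rw [heu_v, Finset.mem_singleton] at hx
                  subst hx
                  exact Or.inl hvnot)
              exact ⟨_, hres.1, hres.2.1, hres.2.2⟩
            · by_cases hfex : ∃ f ∈ H.edges, f ≠ eu ∧ e' ⊆ f
              · -- CASE ii
                obtain ⟨f, hfm, hfne, hesub⟩ := hfex
                set H' : Hypergraph' V := ⟨H.verts, H.edges.erase eu,
                  fun g hg => H.nonempty_of_mem g (Finset.mem_of_mem_erase hg),
                  fun g hg => H.subset_verts g (Finset.mem_of_mem_erase hg)⟩ with hH'
                set P' : PF V := P.reb (fun w => (P.bag w).erase v)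
                  (fun w => (P.cover w).image (fun g => if g = eu then f else g)) with hP'def
                have hbag' : ∀ w, P'.bag w = (P.bag w).erase v := fun _ => rfl
                have hcov' : ∀ w, P'.cover w
                    = (P.cover w).image (fun g => if g = eu then f else g) := fun _ => rfl
                have hfH' : f ∈ H.edges.erase eu := Finset.mem_erase.mpr ⟨hfne, hfm⟩
                have hP'G : P'.IsG H' := by
                  refine ⟨?_, ?_, ?_, ?_⟩
                  · intro g hg
                    have hgH : g ∈ H.edges := Finset.mem_of_mem_erase hg
                    have hgne : g ≠ eu := (Finset.mem_erase.mp hg).1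
                    obtain ⟨w, hwc⟩ := hP.1 g hgH
                    refine ⟨w, ?_⟩
                    rw [hbag']
                    intro x hx
                    refine Finset.mem_erase.mpr ⟨?_, hwc hx⟩
                    rintro rfl
                    exact hgne (hvedge g hgH hx)
                  · intro x i hxi
                    rw [hbag'] at hxi
                    obtain ⟨hxv, hxi'⟩ := Finset.mem_erase.mp hxi
                    rcases hP.2.1 x i hxi' with hL | htop
                    · left
                      rw [show P'.par i = P.par i from rfl, hbag']
                      exact Finset.mem_erase.mpr ⟨hxv, hL⟩
                    · right
                      intro j hj
                      rw [hbag'] at hj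
                      exact htop j (Finset.mem_erase.mp hj).2
                  · intro w g hg
                    rw [hcov'] at hg
                    obtain ⟨g0, hg0, rfl⟩ := Finset.mem_image.mp hg
                    by_cases h : g0 = eu
                    · rw [if_pos h]; exact hfH'
                    · rw [if_neg h]
                      exact Finset.mem_erase.mpr ⟨h, hP.2.2.1 w hg0⟩
                  · intro w x hx
                    rw [hbag'] at hx
                    obtain ⟨hxv, hxb⟩ := Finset.mem_erase.mp hx
                    obtain ⟨g0, hg0, hxg0⟩ := Finset.mem_biUnion.mp (hP.2.2.2 w hxb)
                    rw [hcov']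
                    refine Finset.mem_biUnion.mpr ⟨if g0 = eu then f else g0,
                      Finset.mem_image_of_mem _ hg0, ?_⟩
                    by_cases h : g0 = eu
                    · rw [if_pos h]
                      subst h
                      exact hesub (Finset.mem_erase.mpr ⟨hxv, hxg0⟩)
                    · rw [if_neg h]; exact hxg0
                have hw' : ∀ w, (P'.cover w).card ≤ 1 := fun w => by
                  rw [hcov']; exact Finset.card_image_le.trans (hw w)
                have hmu' : mu H' P' ≤ N := by
                  have h1 : ∑ g ∈ H.edges.erase eu, (g.card + 1) + (eu.card + 1)
                      = ∑ g ∈ H.edges, (g.card + 1) := Finset.sum_erase_add _ _ heu_mem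
                  have h3 : (∑ w : Fin P'.n, ((P'.bag w).card + (P'.cover w).card))
                      ≤ ∑ w : Fin P.n, ((P.bag w).card + (P.cover w).card) := by
                    refine Finset.sum_le_sum (fun w _ => ?_)
                    have h4 : (P'.cover w).card ≤ (P.cover w).card := Finset.card_image_le
                    have h5 : (P'.bag w).card ≤ (P.bag w).card := Finset.card_erase_le
                    omega
                  simp only [mu, H'] at hmu ⊢
                  omega
                obtain ⟨Q', hQ'G, hQ'j, hQ'w⟩ := ih H' P' hmu' hP'G hw'
                have hvnot : ∀ w, v ∉ Q'.bag w := by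
                  refine not_mem_bag_of_not_mem_edges hQ'G hQ'j (fun g hg hvg => ?_)
                  exact (Finset.mem_erase.mp hg).1 (hvedge g (Finset.mem_of_mem_erase hg) hvg)
                obtain ⟨w0, hw0⟩ := hQ'G.1 f hfH'
                have hres := Q'.attach_isG w0 hQ'G hQ'j hQ'w (Finset.erase_subset _ _) heu_mem
                  (fun g hg => by
                    by_cases hge : g = eu
                    · exact Or.inl hge
                    · exact Or.inr (Finset.mem_erase.mpr ⟨hge, hg⟩))
                  (fun x hx => by
                    by_cases hxv : x = v
                    · subst hxv
                      exact Or.inl hvnot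
                    · exact Or.inr (hw0 (hesub (Finset.mem_erase.mpr ⟨hxv, hx⟩))))
                exact ⟨_, hres.1, hres.2.1, hres.2.2⟩
              · -- CASE iii
                have he'ne : e' ≠ ∅ := he'
                have he'nonempty : e'.Nonempty := Finset.nonempty_iff_ne_empty.mpr he'ne
                have hvne' : v ∉ e' := Finset.notMem_erase v eu
                have he'sub : e' ⊆ eu := Finset.erase_subset _ _
                have he'notedge : e' ∉ H.edges := by
                  intro hmem
                  have := hanti e' hmem eu heu_mem he'sub
                  rw [← this] at hveu
                  exact hvne' hveu
                set H' : Hypergraph' V := ⟨H.verts, insert e' (H.edges.erase eu),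
                  fun g hg => by
                    rcases Finset.mem_insert.mp hg with rfl | hg'
                    · exact he'nonempty
                    · exact H.nonempty_of_mem g (Finset.mem_of_mem_erase hg'),
                  fun g hg => by
                    rcases Finset.mem_insert.mp hg with rfl | hg'
                    · exact (he'sub.trans (H.subset_verts eu heu_mem))
                    · exact H.subset_verts g (Finset.mem_of_mem_erase hg')⟩ with hH'
                set P' : PF V := P.reb (fun w => (P.bag w).erase v)
                  (fun w => (P.cover w).image (fun g => if g = eu then e' else g)) with hP'def
                have hbag' : ∀ w, P'.bag w = (P.bag w).erase v := fun _ => rfl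
                have hcov' : ∀ w, P'.cover w
                    = (P.cover w).image (fun g => if g = eu then e' else g) := fun _ => rfl
                have hH'edges : H'.edges = insert e' (H.edges.erase eu) := rfl
                have hP'G : P'.IsG H' := by
                  refine ⟨?_, ?_, ?_, ?_⟩
                  · intro g hg
                    rcases Finset.mem_insert.mp hg with rfl | hg'
                    · refine ⟨u, ?_⟩
                      rw [hbag', hbag_eu]
                    · have hgH : g ∈ H.edges := Finset.mem_of_mem_erase hg'
                      have hgne : g ≠ eu := (Finset.mem_erase.mp hg').1
                      obtain ⟨w, hwc⟩ := hP.1 g hgH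
                      refine ⟨w, ?_⟩
                      rw [hbag']
                      intro x hx
                      refine Finset.mem_erase.mpr ⟨?_, hwc hx⟩
                      rintro rfl
                      exact hgne (hvedge g hgH hx)
                  · intro x i hxi
                    rw [hbag'] at hxi
                    obtain ⟨hxv, hxi'⟩ := Finset.mem_erase.mp hxi
                    rcases hP.2.1 x i hxi' with hL | htop
                    · left
                      rw [show P'.par i = P.par i from rfl, hbag']
                      exact Finset.mem_erase.mpr ⟨hxv, hL⟩
                    · right
                      intro j hj
                      rw [hbag'] at hj
                      exact htop j (Finset.mem_erase.mp hj).2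
                  · intro w g hg
                    rw [hcov'] at hg
                    obtain ⟨g0, hg0, rfl⟩ := Finset.mem_image.mp hg
                    by_cases h : g0 = eu
                    · rw [if_pos h]; exact Finset.mem_insert_self _ _
                    · rw [if_neg h]
                      exact Finset.mem_insert_of_mem (Finset.mem_erase.mpr ⟨h, hP.2.2.1 w hg0⟩)
                  · intro w x hx
                    rw [hbag'] at hx
                    obtain ⟨hxv, hxb⟩ := Finset.mem_erase.mp hx
                    obtain ⟨g0, hg0, hxg0⟩ := Finset.mem_biUnion.mp (hP.2.2.2 w hxb)
                    rw [hcov']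
                    refine Finset.mem_biUnion.mpr ⟨if g0 = eu then e' else g0,
                      Finset.mem_image_of_mem _ hg0, ?_⟩
                    by_cases h : g0 = eu
                    · rw [if_pos h]
                      subst h
                      exact Finset.mem_erase.mpr ⟨hxv, hxg0⟩
                    · rw [if_neg h]; exact hxg0
                have hw' : ∀ w, (P'.cover w).card ≤ 1 := fun w => by
                  rw [hcov']; exact Finset.card_image_le.trans (hw w)
                have hmu' : mu H' P' ≤ N := by
                  have he'no : e' ∉ H.edges.erase eu := fun hc =>
                    he'notedge (Finset.mem_of_mem_erase hc)
                  have h0 : ∑ g ∈ insert e' (H.edges.erase eu), (g.card + 1)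
                      = (e'.card + 1) + ∑ g ∈ H.edges.erase eu, (g.card + 1) := by
                    rw [Finset.sum_insert he'no]
                  have h1 : ∑ g ∈ H.edges.erase eu, (g.card + 1) + (eu.card + 1)
                      = ∑ g ∈ H.edges, (g.card + 1) := Finset.sum_erase_add _ _ heu_mem
                  have h2 : e'.card + 1 = eu.card := by
                    rw [he'def, Finset.card_erase_of_mem hveu]
                    have : 0 < eu.card := Finset.card_pos.mpr ⟨v, hveu⟩
                    omega
                  have h3 : (∑ w : Fin P'.n, ((P'.bag w).card + (P'.cover w).card))
                      ≤ ∑ w : Fin P.n, ((P.bag w).card + (P.cover w).card) := by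
                    refine Finset.sum_le_sum (fun w _ => ?_)
                    have h4 : (P'.cover w).card ≤ (P.cover w).card := Finset.card_image_le
                    have h5 : (P'.bag w).card ≤ (P.bag w).card := Finset.card_erase_le
                    omega
                  simp only [mu, H'] at hmu ⊢
                  omega
                obtain ⟨Q', hQ'G, hQ'j, hQ'w⟩ := ih H' P' hmu' hP'G hw'
                -- key characterisation of the nodes whose cover is {e'}
                have hQbag_e' : ∀ w, Q'.cover w = {e'} → Q'.bag w = e' := by
                  intro w hcw
                  rw [hQ'j w, hcw]
                  simp
                have hWiff : ∀ w, e' ⊆ Q'.bag w ↔ Q'.cover w = {e'} := by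
                  intro w
                  constructor
                  · intro hsub'
                    have hne0 : (Q'.cover w).Nonempty := by
                      rcases Finset.eq_empty_or_nonempty (Q'.cover w) with h | h
                      · exfalso
                        rw [hQ'j w, h] at hsub'
                        simp only [Finset.biUnion_empty] at hsub'
                        obtain ⟨x, hx⟩ := he'nonempty
                        exact Finset.notMem_empty x (hsub' hx)
                      · exact h
                    obtain ⟨g, hgw⟩ := Finset.card_eq_one.mp
                      (le_antisymm (hQ'w w) (Finset.card_pos.mpr hne0))
                    have hbw : Q'.bag w = g := by rw [hQ'j w, hgw]; simp
                    have hgH' : g ∈ H'.edges := hQ'G.2.2.1 w (by rw [hgw]; exact Finset.mem_singleton_self g)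
                    rcases Finset.mem_insert.mp hgH' with rfl | hg'
                    · exact hgw
                    · exfalso
                      refine hfex ⟨g, Finset.mem_of_mem_erase hg', (Finset.mem_erase.mp hg').1, ?_⟩
                      rw [← hbw]
                      exact hsub'
                  · intro hcw
                    rw [hQbag_e' w hcw]
                have hvnot : ∀ w, v ∉ Q'.bag w := by
                  refine not_mem_bag_of_not_mem_edges hQ'G hQ'j (fun g hg hvg => ?_)
                  rcases Finset.mem_insert.mp hg with rfl | hg'
                  · exact hvne' hvg
                  · exact (Finset.mem_erase.mp hg').1 (hvedge g (Finset.mem_of_mem_erase hg') hvg)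
                set Q : PF V := Q'.reb (fun w => if Q'.cover w = {e'} then eu else Q'.bag w)
                  (fun w => if Q'.cover w = {e'} then {eu} else Q'.cover w) with hQdef
                have hQbag : ∀ w, Q.bag w = if Q'.cover w = {e'} then eu else Q'.bag w := fun _ => rfl
                have hQcov : ∀ w, Q.cover w = if Q'.cover w = {e'} then {eu} else Q'.cover w := fun _ => rfl
                have hmono : ∀ w, Q'.bag w ⊆ Q.bag w := by
                  intro w
                  rw [hQbag]
                  by_cases h : Q'.cover w = {e'}
                  · rw [if_pos h, hQbag_e' w h]
                    exact he'sub
                  · rw [if_neg h]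
                have hmem_iff : ∀ (x : V) w, x ≠ v → (x ∈ Q.bag w ↔ x ∈ Q'.bag w) := by
                  intro x w hxv
                  rw [hQbag]
                  by_cases h : Q'.cover w = {e'}
                  · rw [if_pos h, hQbag_e' w h]
                    constructor
                    · intro hx; exact Finset.mem_erase.mpr ⟨hxv, hx⟩
                    · intro hx; exact he'sub hx
                  · rw [if_neg h]
                have hvmem_iff : ∀ w, v ∈ Q.bag w ↔ Q'.cover w = {e'} := by
                  intro w
                  rw [hQbag]
                  by_cases h : Q'.cover w = {e'}
                  · rw [if_pos h]
                    simp [h, hveu]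
                  · rw [if_neg h]
                    simp [h, hvnot w]
                have hQG : Q.IsG H := by
                  refine ⟨?_, ?_, ?_, ?_⟩
                  · intro g hg
                    by_cases hgeu : g = eu
                    · subst hgeu
                      obtain ⟨w1, hw1⟩ := hQ'G.1 e' (Finset.mem_insert_self _ _)
                      refine ⟨w1, ?_⟩
                      rw [hQbag, if_pos ((hWiff w1).mp hw1)]
                    · obtain ⟨w, hwc⟩ := hQ'G.1 g
                        (Finset.mem_insert_of_mem (Finset.mem_erase.mpr ⟨hgeu, hg⟩))
                      exact ⟨w, hwc.trans (hmono w)⟩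
                  · intro x i hxi
                    by_cases hxv : x = v
                    · subst hxv
                      have hcovi : Q'.cover i = {e'} := (hvmem_iff i).mp hxi
                      by_cases hex : ∃ x0 ∈ e', ∀ j, x0 ∈ Q'.bag j → Q'.anc i j
                      · right
                        obtain ⟨x0, hx0e, hx0top⟩ := hex
                        intro j hvj
                        have hcovj : Q'.cover j = {e'} := (hvmem_iff j).mp hvj
                        have : x0 ∈ Q'.bag j := by
                          rw [hQbag_e' j hcovj]
                          exact hx0e
                        exact hx0top j this
                      · left
                        push_neg at hex
                        have hall_par : e' ⊆ Q'.bag (Q'.par i) := by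
                          intro x0 hx0
                          have hx0i : x0 ∈ Q'.bag i := by
                            rw [hQbag_e' i hcovi]
                            exact hx0
                          rcases hQ'G.2.1 x0 i hx0i with hL | hT
                          · exact hL
                          · obtain ⟨j, hj1, hj2⟩ := hex x0 hx0
                            exact absurd (hT j hj1) hj2
                        have hcovpi : Q'.cover (Q'.par i) = {e'} := (hWiff _).mp hall_par
                        rw [show Q.par i = Q'.par i from rfl, hQbag, if_pos hcovpi]
                        exact hveu
                    · have hxi' : x ∈ Q'.bag i := (hmem_iff x i hxv).mp hxi
                      rcases hQ'G.2.1 x i hxi' with hL | hT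
                      · left
                        rw [show Q.par i = Q'.par i from rfl]
                        exact (hmem_iff x _ hxv).mpr hL
                      · right
                        intro j hj
                        exact hT j ((hmem_iff x j hxv).mp hj)
                  · intro w g hg
                    rw [hQcov] at hg
                    by_cases h : Q'.cover w = {e'}
                    · rw [if_pos h, Finset.mem_singleton] at hg
                      subst hg
                      exact heu_mem
                    · rw [if_neg h] at hg
                      have hgH' : g ∈ H'.edges := hQ'G.2.2.1 w hg
                      rcases Finset.mem_insert.mp hgH' with hge' | hg'
                      · exfalso
                        apply h
                        have h1 : (Q'.cover w).Nonempty := ⟨g, hg⟩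
                        obtain ⟨g1, hg1⟩ := Finset.card_eq_one.mp
                          (le_antisymm (hQ'w w) (Finset.card_pos.mpr h1))
                        rw [hg1] at hg ⊢
                        rw [Finset.mem_singleton] at hg
                        rw [← hg, hge']
                      · exact Finset.mem_of_mem_erase hg'
                  · intro w x hx
                    rw [hQcov]
                    rw [hQbag] at hx
                    by_cases h : Q'.cover w = {e'}
                    · rw [if_pos h] at hx ⊢
                      simpa using hx
                    · rw [if_neg h] at hx ⊢
                      exact hQ'G.2.2.2 w hx
                have hQj : Q.Join := by
                  intro w
                  rw [hQbag, hQcov]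
                  by_cases h : Q'.cover w = {e'}
                  · rw [if_pos h, if_pos h]
                    simp
                  · rw [if_neg h, if_neg h]
                    exact hQ'j w
                have hQw : ∀ w, (Q.cover w).card ≤ 1 := by
                  intro w
                  rw [hQcov]
                  by_cases h : Q'.cover w = {e'}
                  · rw [if_pos h]; simp
                  · rw [if_neg h]; exact hQ'w w
                exact ⟨Q, hQG, hQj, hQw⟩
      · -- no active node : edges must be empty
        push_neg at hact
        have hE : H.edges = ∅ := by
          by_contra hne
          obtain ⟨e, he⟩ := Finset.nonempty_iff_ne_empty.mpr hne
          obtain ⟨w, hwc⟩ := hP.1 e he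
          obtain ⟨x, hx⟩ := H.nonempty_of_mem e he
          have := (hact w).1
          rw [this] at hwc
          exact Finset.notMem_empty x (hwc hx)
        exact ⟨_, single_empty H hE⟩

end PF
end GHW


namespace GHW
variable {V : Type} [DecidableEq V]

lemma exists_trivial_HD (H : Hypergraph' V) :
    ∃ D : Decomp V, D.IsHD H ∧ ∀ u, (D.cover u).card ≤ H.edges.card := by
  have hG : (PF.single (H.edges.biUnion id) H.edges).IsG H := by
    refine ⟨?_, ?_, ?_, ?_⟩
    · intro e he
      exact ⟨(0 : Fin 1), Finset.subset_biUnion_of_mem id he⟩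
    · intro v i hv
      exact Or.inl hv
    · intro u
      exact subset_rfl
    · intro u
      exact subset_rfl
  exact ⟨_, (PF.single (H.edges.biUnion id) H.edges).toDecomp_isHD hG (fun _ => rfl),
    fun u => le_rfl⟩

lemma edges_empty_of_ghw_zero (H : Hypergraph' V) (D : Decomp V) (hG : D.IsGHD H)
    (h0 : ∀ u, (D.cover u).card ≤ 0) : H.edges = ∅ := by
  rw [Finset.eq_empty_iff_forall_notMem]
  intro e he
  obtain ⟨u, hu⟩ := hG.2.1 e he
  obtain ⟨x, hx⟩ := H.nonempty_of_mem e he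
  have h1 : D.cover u = ∅ := Finset.card_eq_zero.mp (Nat.le_zero.mp (h0 u))
  have h2 := hG.2.2.2.2 u (hu hx)
  rw [h1] at h2
  simpa using h2

lemma zero_mem_hw (H : Hypergraph' V) (hE : H.edges = ∅) :
    ∃ D : Decomp V, D.IsHD H ∧ ∀ u, (D.cover u).card ≤ 0 := by
  obtain ⟨hG, hj, hwd⟩ := PF.single_empty H hE
  refine ⟨_, (PF.single (V := V) ∅ ∅).toDecomp_isHD hG hj, fun u => ?_⟩
  simp [PF.single, PF.toDecomp]

lemma one_mem_hw (H : Hypergraph' V) (D : Decomp V) (hG : D.IsGHD H)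
    (h1 : ∀ u, (D.cover u).card ≤ 1) :
    ∃ D' : Decomp V, D'.IsHD H ∧ ∀ u, (D'.cover u).card ≤ 1 := by
  obtain ⟨P, hP, hPw⟩ := exists_pf H D hG 1 h1
  obtain ⟨Q, hQG, hQj, hQw⟩ := PF.main_w1 (PF.mu H P) H P le_rfl hP hPw
  exact ⟨Q.toDecomp, Q.toDecomp_isHD hQG hQj, hQw⟩

end GHW

/-- For every hypergraph `H` with `hw(H) ≤ 2` it holds that `ghw(H) = hw(H)`;
in particular, if `hw(H) = 2` then `ghw(H) = 2`. -/
theorem ghw_eq_hw_of_hw_le_two (H : Hypergraph' V) :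
    (hw H ≤ 2 → ghw H = hw H) ∧ (hw H = 2 → ghw H = 2) := by
  classical
  have hmain : hw H ≤ 2 → ghw H = hw H := by
    intro h2
    set Sh := {k | ∃ D : Decomp V, D.IsHD H ∧ ∀ u, (D.cover u).card ≤ k} with hSh
    set Sg := {k | ∃ D : Decomp V, D.IsGHD H ∧ ∀ u, (D.cover u).card ≤ k} with hSg
    have hhw : hw H = sInf Sh := rfl
    have hghw : ghw H = sInf Sg := rfl
    have hsub : Sh ⊆ Sg := by
      rintro k ⟨D, hD, hc⟩
      exact ⟨D, hD.1, hc⟩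
    obtain ⟨D0, hD0, hc0⟩ := GHW.exists_trivial_HD H
    have hh_ne : Sh.Nonempty := ⟨H.edges.card, D0, hD0, hc0⟩
    have hg_ne : Sg.Nonempty := ⟨H.edges.card, hsub ⟨D0, hD0, hc0⟩⟩
    have hg_le_h : ghw H ≤ hw H := by
      rw [hhw, hghw]
      exact Nat.sInf_le (hsub (Nat.sInf_mem hh_ne))
    refine le_antisymm hg_le_h ?_
    have hg_mem : sInf Sg ∈ Sg := Nat.sInf_mem hg_ne
    rcases Nat.lt_or_ge (ghw H) 2 with hlt | hge
    · interval_cases hg : ghw H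
      · -- ghw = 0
        obtain ⟨D, hD, hc⟩ := hg_mem
        have hE : H.edges = ∅ := GHW.edges_empty_of_ghw_zero H D hD (by
          intro u
          have := hc u
          rw [hghw] at hg
          omega)
        obtain ⟨D', hD', hc'⟩ := GHW.zero_mem_hw H hE
        have : hw H ≤ 0 := by
          rw [hhw]
          exact Nat.sInf_le ⟨D', hD', hc'⟩
        omega
      · -- ghw = 1
        obtain ⟨D, hD, hc⟩ := hg_mem
        obtain ⟨D', hD', hc'⟩ := GHW.one_mem_hw H D hD (by
          intro u
          have := hc u
          rw [hghw] at hg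
          omega)
        have : hw H ≤ 1 := by
          rw [hhw]
          exact Nat.sInf_le ⟨D', hD', hc'⟩
        omega
    · omega
  refine ⟨hmain, fun h2 => ?_⟩
  rw [hmain (le_of_eq h2), h2]
end

section
/- For every hypergraph H = (V(H), E(H)) and every k ≥ 1: ghw(H) ≤ k if and only if hw(H') ≤ k, where H' = (V(H), E(H) ∪ f(H,k)) and f(H,k) is the set of all nonempty subsets of sets of the form e ∩ (e_1 ∪ ⋯ ∪ e_j) with e ∈ E(H), j ≤ k, and e_1, …, e_j ∈ E(H) \ {e}. -/
variable {V : Type} [DecidableEq V]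

/-- The set `f(H,k)` of subedges: all nonempty subsets of sets of the form
`e ∩ (e₁ ∪ ⋯ ∪ e_j)` with `e ∈ E(H)`, `j ≤ k` and `e₁, …, e_j ∈ E(H) \ {e}`. -/
def fsub (H : Hypergraph' V) (k : ℕ) : Finset (Finset V) :=
  H.edges.biUnion fun e =>
    (((H.edges.erase e).powerset.filter fun F => F.card ≤ k).biUnion fun F =>
      (e ∩ F.biUnion id).powerset.filter fun s => s.Nonempty)


open SimpleGraph

section WalkAux

variable {α : Type*} {T : SimpleGraph α} {S S' : Set α}

/-- The inclusion homomorphism from an induced subgraph to the ambient graph. -/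
def GMS.inclHom (T : SimpleGraph α) (S : Set α) : T.induce S →g T :=
  ⟨Subtype.val, fun h => h⟩

lemma GMS.reachable_induce_of_walk {a b : α} (w : T.Walk a b)
    (hw : ∀ x ∈ w.support, x ∈ S) (ha : a ∈ S) (hb : b ∈ S) :
    (T.induce S).Reachable ⟨a, ha⟩ ⟨b, hb⟩ := by
  induction w with
  | nil => exact Reachable.refl _
  | @cons a c b h p ih =>
    have hc : c ∈ S := hw c (by simp [Walk.support_cons])
    have hadj : (T.induce S).Adj ⟨a, ha⟩ ⟨c, hc⟩ := h
    exact hadj.reachable.trans (ih (fun x hx => hw x (by simp [Walk.support_cons, hx])) hc hb)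

def GMS.monoHom (T : SimpleGraph α) (hSS : S ⊆ S') : T.induce S →g T.induce S' where
  toFun := fun x => ⟨x.1, hSS x.2⟩
  map_rel' := fun h => h

lemma GMS.reachable_induce_mono (hSS : S ⊆ S') {a b : ↑S}
    (r : (T.induce S).Reachable a b) :
    (T.induce S').Reachable ⟨a.1, hSS a.2⟩ ⟨b.1, hSS b.2⟩ :=
  r.map (GMS.monoHom T hSS)

lemma GMS.exists_walk_of_reachable_induce {a b : α} (ha : a ∈ S) (hb : b ∈ S)
    (r : (T.induce S).Reachable ⟨a, ha⟩ ⟨b, hb⟩) :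
    ∃ w : T.Walk a b, ∀ x ∈ w.support, x ∈ S := by
  obtain ⟨w⟩ := r
  refine ⟨w.map (GMS.inclHom T S), ?_⟩
  intro x hx
  replace hx := List.mem_map.1 (Eq.mp (congrArg (x ∈ ·) (Walk.support_map (GMS.inclHom T S) w)) hx)
  obtain ⟨y, _, rfl⟩ := hx
  exact y.2

end WalkAux

section MoreAux

open SimpleGraph

variable {V : Type} [DecidableEq V]

/-- The trivial one-node decomposition with a given cover. -/
def GMS.trivDecomp (V : Type) (E : Finset (Finset V)) [DecidableEq V] : Decomp V where
  n := 1
  tree := ⊥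
  root := 0
  bag := fun _ => E.biUnion id
  cover := fun _ => E

lemma GMS.bot_isTree : (⊥ : SimpleGraph (Fin 1)).IsTree := by
  constructor
  · constructor
    · intro a b
      rw [Subsingleton.elim a b]
  · intro v p hp
    cases p with
    | nil => exact hp.ne_nil rfl
    | cons h _ => exact h.elim

lemma GMS.trivDecomp_isHD (H : Hypergraph' V) : (GMS.trivDecomp V H.edges).IsHD H := by
  have hss : Subsingleton (Fin (GMS.trivDecomp V H.edges).n) := by
    show Subsingleton (Fin 1); infer_instance
  constructor
  · refine ⟨GMS.bot_isTree, ?_, ?_, ?_, ?_⟩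
    · intro e he
      exact ⟨(0 : Fin 1), fun x hx => Finset.mem_biUnion.2 ⟨e, he, hx⟩⟩
    · intro v a b
      have : a = b := Subtype.ext (@Subsingleton.elim _ hss a.1 b.1)
      rw [this]
    · intro u
      exact fun e he => he
    · intro u
      exact fun x hx => hx
  · intro u u' _ v hv _
    have : u = u' := @Subsingleton.elim _ hss u u'
    rw [this]
    exact hv

lemma GMS.mem_fsub_intro (H : Hypergraph' V) (k : ℕ) {e s : Finset V} {F : Finset (Finset V)}
    (he : e ∈ H.edges) (hF : F ⊆ H.edges.erase e)
    (hcard : F.card ≤ k) (hs : s ⊆ e ∩ F.biUnion id) (hne : s.Nonempty) :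
    s ∈ fsub H k := by
  simp only [fsub, Finset.mem_biUnion, Finset.mem_filter, Finset.mem_powerset]
  exact ⟨e, he, F, ⟨hF, hcard⟩, hs, hne⟩

lemma GMS.exists_superedge_of_mem_fsub {H : Hypergraph' V} {k : ℕ} {s : Finset V}
    (hs : s ∈ fsub H k) : ∃ t ∈ H.edges, s ⊆ t := by
  rw [fsub, Finset.mem_biUnion] at hs
  obtain ⟨e, he, hs⟩ := hs
  rw [Finset.mem_biUnion] at hs
  obtain ⟨F, _, hs⟩ := hs
  rw [Finset.mem_filter, Finset.mem_powerset] at hs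
  exact ⟨e, he, fun x hx => (Finset.mem_inter.1 (hs.1 hx)).1⟩

end MoreAux


section Constr

variable {V : Type} [DecidableEq V]

/-- `u` is an ancestor of `x` (with respect to the chosen system of paths `P`). -/
def GMS.descP (D : Decomp V) (P : ∀ a b : Fin D.n, D.tree.Walk a b) (u x : Fin D.n) : Prop :=
  u ∈ (P D.root x).support

/-- The edge `e` is kept "full" at node `u`. -/
def GMS.full (D : Decomp V) (P : ∀ a b : Fin D.n, D.tree.Walk a b)
    (zmap : Finset V → Fin D.n) (e : Finset V) (u : Fin D.n) : Prop :=
  (GMS.descP D P u (zmap e) ∧ u ≠ zmap e) →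
    ∀ y ∈ (P u (zmap e)).support, y ≠ u → e ∈ D.cover y

/-- The set of cover edges absorbed completely into the bag at `u`. -/
noncomputable def GMS.enl (D : Decomp V) (P : ∀ a b : Fin D.n, D.tree.Walk a b)
    (zmap : Finset V → Fin D.n) (u : Fin D.n) : Finset (Finset V) :=
  @Finset.filter _ (fun e => GMS.descP D P u (zmap e) ∧ GMS.full D P zmap e u)
    (Classical.decPred _) (D.cover u)

/-- The enlarged bag at `u`. -/
noncomputable def GMS.Bfin (D : Decomp V) (P : ∀ a b : Fin D.n, D.tree.Walk a b)
    (zmap : Finset V → Fin D.n) (u : Fin D.n) : Finset V :=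
  D.bag u ∪ (GMS.enl D P zmap u).biUnion id

/-- The new cover piece obtained from the edge `e` at node `u`. -/
noncomputable def GMS.piece (D : Decomp V) (P : ∀ a b : Fin D.n, D.tree.Walk a b)
    (zmap : Finset V → Fin D.n) (e : Finset V) (u : Fin D.n) : Finset V :=
  @ite _ (GMS.full D P zmap e u) (Classical.propDecidable _) e (e ∩ GMS.Bfin D P zmap u)

/-- The new cover at `u`. -/
noncomputable def GMS.cov' (D : Decomp V) (P : ∀ a b : Fin D.n, D.tree.Walk a b)
    (zmap : Finset V → Fin D.n) (u : Fin D.n) : Finset (Finset V) :=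
  @Finset.filter _ (fun s => s.Nonempty) (Classical.decPred _)
    ((D.cover u).image (fun e => GMS.piece D P zmap e u))

lemma GMS.mem_enl {D : Decomp V} {P : ∀ a b : Fin D.n, D.tree.Walk a b}
    {zmap : Finset V → Fin D.n} {u : Fin D.n} {e : Finset V} :
    e ∈ GMS.enl D P zmap u ↔
      e ∈ D.cover u ∧ GMS.descP D P u (zmap e) ∧ GMS.full D P zmap e u :=
  @Finset.mem_filter _ _ (Classical.decPred _) _ _

lemma GMS.mem_cov' {D : Decomp V} {P : ∀ a b : Fin D.n, D.tree.Walk a b}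
    {zmap : Finset V → Fin D.n} {u : Fin D.n} {s : Finset V} :
    s ∈ GMS.cov' D P zmap u ↔
      (∃ e ∈ D.cover u, GMS.piece D P zmap e u = s) ∧ s.Nonempty := by
  rw [GMS.cov']
  rw [@Finset.mem_filter _ _ (Classical.decPred _) _ _, Finset.mem_image]

lemma GMS.card_cov'_le {D : Decomp V} {P : ∀ a b : Fin D.n, D.tree.Walk a b}
    {zmap : Finset V → Fin D.n} {u : Fin D.n} :
    (GMS.cov' D P zmap u).card ≤ (D.cover u).card := by
  rw [GMS.cov']
  exact le_trans (Finset.card_le_card (@Finset.filter_subset _ _ (Classical.decPred _) _))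
    Finset.card_image_le

lemma GMS.piece_of_full {D : Decomp V} {P : ∀ a b : Fin D.n, D.tree.Walk a b}
    {zmap : Finset V → Fin D.n} {u : Fin D.n} {e : Finset V}
    (h : GMS.full D P zmap e u) : GMS.piece D P zmap e u = e := by
  rw [GMS.piece]
  exact if_pos h

lemma GMS.piece_of_not_full {D : Decomp V} {P : ∀ a b : Fin D.n, D.tree.Walk a b}
    {zmap : Finset V → Fin D.n} {u : Fin D.n} {e : Finset V}
    (h : ¬ GMS.full D P zmap e u) :
    GMS.piece D P zmap e u = e ∩ GMS.Bfin D P zmap u := by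
  rw [GMS.piece]
  exact if_neg h

end Constr

/-- For every hypergraph `H` and every `k ≥ 1`: `ghw(H) ≤ k` iff `hw(H') ≤ k`, where
`H' = (V(H), E(H) ∪ f(H,k))`. -/
theorem ghw_le_iff_hw_fsub_le (H : Hypergraph' V) (k : ℕ) (hk : 1 ≤ k)
    (H' : Hypergraph' V) (hv : H'.verts = H.verts)
    (he : H'.edges = H.edges ∪ fsub H k) :
    ghw H ≤ k ↔ hw H' ≤ k := by
  classical
  have hGne : {m | ∃ D : Decomp V, D.IsGHD H ∧ ∀ u, (D.cover u).card ≤ m}.Nonempty :=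
    ⟨H.edges.card, GMS.trivDecomp V H.edges, (GMS.trivDecomp_isHD H).1, fun _ => le_refl _⟩
  have hHne : {m | ∃ D : Decomp V, D.IsHD H' ∧ ∀ u, (D.cover u).card ≤ m}.Nonempty :=
    ⟨H'.edges.card, GMS.trivDecomp V H'.edges, GMS.trivDecomp_isHD H', fun _ => le_refl _⟩
  constructor
  · intro hg
    obtain ⟨D, hD, hDw⟩ := Nat.sInf_mem hGne
    have hDw' : ∀ u, (D.cover u).card ≤ k := fun u => (hDw u).trans hg
    obtain ⟨htree, hcov, hconn, hsubE, hbag⟩ := hD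
    choose P hP hU using htree.existsUnique_path
    -- basic facts about the canonical paths
    have hsep : ∀ (S : Set (Fin D.n)), (D.tree.induce S).Preconnected →
        ∀ a b, a ∈ S → b ∈ S → ∀ x ∈ (P a b).support, x ∈ S := by
      intro S hpre a b ha hb x hx
      obtain ⟨w, hw⟩ := GMS.exists_walk_of_reachable_induce ha hb (hpre ⟨a, ha⟩ ⟨b, hb⟩)
      have hbp : w.bypass = P a b := hU a b w.bypass w.bypass_isPath
      exact hw x (w.support_bypass_subset (hbp ▸ hx))
    have hPnil : ∀ a, (P a a).support = [a] := by
      intro a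
      have h0 : (SimpleGraph.Walk.nil : D.tree.Walk a a) = P a a :=
        hU a a SimpleGraph.Walk.nil SimpleGraph.Walk.IsPath.nil
      rw [← h0]
      rfl
    have hdrop : ∀ a b x (hx : x ∈ (P a b).support),
        (P x b).support ⊆ (P a b).support := by
      intro a b x hx
      have h1 : ((P a b).dropUntil x hx).IsPath := (hP a b).dropUntil hx
      have h2 : (P a b).dropUntil x hx = P x b := hU x b _ h1
      rw [← h2]
      exact SimpleGraph.Walk.support_dropUntil_subset _ hx
    have htake : ∀ a b x (hx : x ∈ (P a b).support),
        (P a x).support ⊆ (P a b).support := by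
      intro a b x hx
      have h1 : ((P a b).takeUntil x hx).IsPath := (hP a b).takeUntil hx
      have h2 : (P a b).takeUntil x hx = P a x := hU a x _ h1
      rw [← h2]
      exact SimpleGraph.Walk.support_takeUntil_subset _ hx
    have hsep' : ∀ u y w, u ∈ (P D.root y).support → u ∉ (P D.root w).support →
        u ∈ (P y w).support := by
      intro u y w hy hw
      by_contra hne
      have hW : u ∉ ((P D.root w).append (P y w).reverse).support := by
        rw [SimpleGraph.Walk.mem_support_append_iff]
        push_neg
        refine ⟨hw, ?_⟩
        rw [SimpleGraph.Walk.support_reverse, List.mem_reverse]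
        exact hne
      have hbp : ((P D.root w).append (P y w).reverse).bypass = P D.root y :=
        hU D.root y _ (SimpleGraph.Walk.bypass_isPath _)
      exact hW (SimpleGraph.Walk.support_bypass_subset _ (hbp ▸ hy))
    -- a canonical covering node for each edge
    obtain ⟨zmap, hzmem⟩ : ∃ z : Finset V → Fin D.n, ∀ e ∈ H.edges, e ⊆ D.bag (z e) := by
      choose f hf using hcov
      exact ⟨fun e => if he' : e ∈ H.edges then f e he' else D.root,
        fun e he' => by dsimp only; rw [dif_pos he']; exact hf e he'⟩
    -- abbreviations
    set dP := GMS.descP D P with hdP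
    set fF := GMS.full D P zmap with hfF
    set enl := GMS.enl D P zmap with henl
    set Bf := GMS.Bfin D P zmap with hBf
    set pc := GMS.piece D P zmap with hpc
    set cv := GMS.cov' D P zmap with hcv
    have hbagB : ∀ u, D.bag u ⊆ Bf u := fun u => Finset.subset_union_left
    have henlB : ∀ u e, e ∈ enl u → e ⊆ Bf u := by
      intro u e heB
      exact (Finset.subset_biUnion_of_mem id heB).trans Finset.subset_union_right
    have henlC : ∀ u e, e ∈ enl u → e ∈ D.cover u := by
      intro u e heB
      rw [henl, GMS.mem_enl] at heB
      exact heB.1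
    have hBsub : ∀ u, Bf u ⊆ (D.cover u).biUnion id := by
      intro u
      rw [hBf, GMS.Bfin]
      refine Finset.union_subset (hbag u) ?_
      intro v hv
      obtain ⟨e, heB, hve⟩ := Finset.mem_biUnion.1 hv
      exact Finset.mem_biUnion.2 ⟨e, henlC u e heB, hve⟩
    -- full edges stay in the enlarged bags all the way down to their home
    have hchain : ∀ u e, e ∈ enl u → ∀ x ∈ (P u (zmap e)).support, e ⊆ Bf x := by
      intro u e heu x hx
      have hmem := heu
      rw [henl, GMS.mem_enl] at hmem
      obtain ⟨hecov, hdU, hfU⟩ := hmem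
      by_cases hxu : x = u
      · subst hxu
        exact henlB x e heu
      have hne : u ≠ zmap e := by
        intro h
        rw [← h, hPnil u, List.mem_singleton] at hx
        exact hxu hx
      have hecx : e ∈ D.cover x := hfU ⟨hdU, hne⟩ x hx hxu
      have hdx : dP x (zmap e) := hdrop D.root (zmap e) u hdU hx
      have hfx : fF e x := by
        rw [hfF, GMS.full]
        rintro ⟨-, -⟩ y hy hyx
        have hy' : y ∈ (P u (zmap e)).support := hdrop u (zmap e) x hx hy
        by_cases hyu : y = u
        · subst hyu
          exact hecov
        · exact hfU ⟨hdU, hne⟩ y hy' hyu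
      have : e ∈ enl x := by
        rw [henl, GMS.mem_enl]
        exact ⟨hecx, hdx, hfx⟩
      exact henlB x e this
    -- connectivity of the new bags
    have hconn' : ∀ v : V, (D.tree.induce {x | v ∈ Bf x}).Preconnected := by
      intro v
      have hSS : {x | v ∈ D.bag x} ⊆ {x | v ∈ Bf x} := fun x hx => hbagB x hx
      have hre : ∀ u (hu : v ∈ Bf u), ∃ s, ∃ hs : v ∈ D.bag s,
          (D.tree.induce {x | v ∈ Bf x}).Reachable ⟨u, hu⟩ ⟨s, hbagB s hs⟩ := by
        intro u hu
        have hu2 := hu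
        rw [hBf, GMS.Bfin, Finset.mem_union] at hu2
        rcases hu2 with hb | hb
        · exact ⟨u, hb, SimpleGraph.Reachable.refl _⟩
        · obtain ⟨e, heu, hve⟩ := Finset.mem_biUnion.1 hb
          have hve : v ∈ e := hve
          have hsupp : ∀ x ∈ (P u (zmap e)).support, x ∈ {x | v ∈ Bf x} :=
            fun x hx => hchain u e heu x hx hve
          have hzbag : v ∈ D.bag (zmap e) :=
            hzmem e (hsubE u (henlC u e heu)) hve
          exact ⟨zmap e, hzbag,
            GMS.reachable_induce_of_walk (P u (zmap e)) hsupp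
              (hsupp u (SimpleGraph.Walk.start_mem_support _))
              (hsupp _ (SimpleGraph.Walk.end_mem_support _))⟩
      intro a b
      obtain ⟨sa, hsa, ra⟩ := hre a.1 a.2
      obtain ⟨sb, hsb, rb⟩ := hre b.1 b.2
      have rmid := GMS.reachable_induce_mono hSS (hconn v ⟨sa, hsa⟩ ⟨sb, hsb⟩)
      exact ra.trans (rmid.trans rb.symm)
    -- separation along paths, for final and original bags
    have hmid : ∀ (w : V) (a b c : Fin D.n), w ∈ Bf a → w ∈ Bf b →
        c ∈ (P a b).support → w ∈ Bf c := by
      intro w a b c ha hb hc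
      exact hsep {x | w ∈ Bf x} (hconn' w) a b ha hb c hc
    have hmidO : ∀ (w : V) (a b c : Fin D.n), w ∈ D.bag a → w ∈ D.bag b →
        c ∈ (P a b).support → w ∈ D.bag c := by
      intro w a b c ha hb hc
      exact hsep {x | w ∈ D.bag x} (hconn w) a b ha hb c hc
    -- width bound
    have hwidth : ∀ u, (cv u).card ≤ k := by
      intro u
      rw [hcv]
      exact GMS.card_cov'_le.trans (hDw' u)
    -- the new covers consist of edges of H'
    have hcovE' : ∀ u, cv u ⊆ H'.edges := by
      intro u s hs
      rw [hcv, GMS.mem_cov'] at hs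
      obtain ⟨⟨e, hec, rfl⟩, hne⟩ := hs
      have heH : e ∈ H.edges := hsubE u hec
      by_cases hf : fF e u
      · rw [hfF] at hf
        rw [GMS.piece_of_full hf, he]
        exact Finset.mem_union_left _ heH
      · rw [hfF] at hf
        rw [GMS.piece_of_not_full hf] at hne ⊢
        have hf2 := hf
        rw [GMS.full] at hf2
        push_neg at hf2
        obtain ⟨⟨hdU, hneU⟩, x, hxsup, hxne, hxnc⟩ := hf2
        have hsubx : ∀ w' ∈ e ∩ GMS.Bfin D P zmap u, w' ∈ (D.cover x).biUnion id := by
          intro w' hw'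
          rcases Finset.mem_inter.1 hw' with ⟨hwe, hwB⟩
          have h1 : w' ∈ Bf (zmap e) := hbagB _ (hzmem e heH hwe)
          have h2 : w' ∈ Bf x := hmid w' u (zmap e) x (by rw [hBf]; exact hwB) h1 hxsup
          exact hBsub x h2
        rw [he]
        refine Finset.mem_union_right _ (GMS.mem_fsub_intro H k heH ?_ (hDw' x) ?_ hne)
        · intro g hg
          exact Finset.mem_erase.2 ⟨by rintro rfl; exact hxnc hg, hsubE x hg⟩
        · intro w' hw'
          exact Finset.mem_inter.2 ⟨(Finset.mem_inter.1 hw').1, hsubx w' hw'⟩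
    -- the new bags are covered by the new covers
    have hbag' : ∀ u, Bf u ⊆ (cv u).biUnion id := by
      intro u v hv
      obtain ⟨e, hec, hve⟩ := Finset.mem_biUnion.1 (hBsub u hv)
      have hve : v ∈ e := hve
      refine Finset.mem_biUnion.2 ⟨pc e u, ?_, ?_⟩
      · rw [hcv, GMS.mem_cov']
        refine ⟨⟨e, hec, rfl⟩, ?_⟩
        by_cases hf : GMS.full D P zmap e u
        · rw [hpc, GMS.piece_of_full hf]
          exact ⟨v, hve⟩
        · rw [hpc, GMS.piece_of_not_full hf]
          exact ⟨v, Finset.mem_inter.2 ⟨hve, by rw [hBf] at hv; exact hv⟩⟩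
      · by_cases hf : GMS.full D P zmap e u
        · rw [hpc, GMS.piece_of_full hf]
          exact hve
        · rw [hpc, GMS.piece_of_not_full hf]
          exact Finset.mem_inter.2 ⟨hve, by rw [hBf] at hv; exact hv⟩
    -- every edge of H' is covered by some new bag
    have hcovH' : ∀ e' ∈ H'.edges, ∃ u, e' ⊆ Bf u := by
      intro e' he'
      rw [he, Finset.mem_union] at he'
      rcases he' with h | h
      · exact ⟨zmap e', fun x hx => hbagB _ (hzmem e' h hx)⟩
      · obtain ⟨t, ht, hsubt⟩ := GMS.exists_superedge_of_mem_fsub h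
        exact ⟨zmap t, fun x hx => hbagB _ (hzmem t ht (hsubt hx))⟩
    -- the special condition
    have hspecial : ∀ u u', u ∈ (P D.root u').support →
        ∀ v, v ∈ Bf u' → v ∈ (cv u).biUnion id → v ∈ Bf u := by
      intro u u' hd v hv' hvc
      obtain ⟨s, hs, hvs⟩ := Finset.mem_biUnion.1 hvc
      rw [hcv, GMS.mem_cov'] at hs
      obtain ⟨⟨e, hec, rfl⟩, -⟩ := hs
      have hvs : v ∈ GMS.piece D P zmap e u := hvs
      by_cases hf : GMS.full D P zmap e u
      · rw [GMS.piece_of_full hf] at hvs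
        by_cases hdz : GMS.descP D P u (zmap e)
        · refine henlB u e ?_ hvs
          rw [henl, GMS.mem_enl]
          exact ⟨hec, hdz, hf⟩
        · obtain ⟨y, hvy, hu'y⟩ : ∃ y, v ∈ D.bag y ∧ u' ∈ (P D.root y).support := by
            have hv'2 := hv'
            rw [hBf, GMS.Bfin, Finset.mem_union] at hv'2
            rcases hv'2 with hb | hb
            · exact ⟨u', hb, SimpleGraph.Walk.end_mem_support _⟩
            · obtain ⟨e₂, he₂, hve₂⟩ := Finset.mem_biUnion.1 hb
              rw [GMS.mem_enl] at he₂
              exact ⟨zmap e₂, hzmem e₂ (hsubE u' he₂.1) hve₂, he₂.2.1⟩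
          have huy : u ∈ (P D.root y).support := htake D.root y u' hu'y hd
          have hyz : u ∈ (P y (zmap e)).support := hsep' u y (zmap e) huy hdz
          have hvz : v ∈ D.bag (zmap e) := hzmem e (hsubE u hec) hvs
          exact hbagB u (hmidO v y (zmap e) u hvy hvz hyz)
      · rw [GMS.piece_of_not_full hf] at hvs
        rw [hBf]
        exact (Finset.mem_inter.1 hvs).2
    -- assemble the hypertree decomposition of H'
    refine Nat.sInf_le ⟨⟨D.n, D.tree, D.root, Bf, cv⟩, ⟨⟨htree, hcovH', hconn', hcovE', hbag'⟩,
      ?_⟩, hwidth⟩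
    intro u u' hdesc v hv hvc
    exact hspecial u u' (hdesc ⟨P D.root u', hP D.root u'⟩) v hv hvc
  · intro hh
    obtain ⟨D, ⟨hG, _⟩, hDw⟩ := Nat.sInf_mem hHne
    have hDw' : ∀ u, (D.cover u).card ≤ k := fun u => (hDw u).trans hh
    obtain ⟨htree, hcov, hconn, hsubE, hbag⟩ := hG
    set g : Finset V → Finset V := fun s => if hs : ∃ t ∈ H.edges, s ⊆ t then hs.choose else s
      with hgdef
    have hgood : ∀ s ∈ H'.edges, g s ∈ H.edges ∧ s ⊆ g s := by
      intro s hs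
      have hex : ∃ t ∈ H.edges, s ⊆ t := by
        rw [he, Finset.mem_union] at hs
        rcases hs with hs | hs
        · exact ⟨s, hs, subset_rfl⟩
        · exact GMS.exists_superedge_of_mem_fsub hs
      have : g s = hex.choose := by rw [hgdef]; exact dif_pos hex
      rw [this]
      exact ⟨hex.choose_spec.1, hex.choose_spec.2⟩
    refine Nat.sInf_le ⟨⟨D.n, D.tree, D.root, D.bag, fun u => (D.cover u).image g⟩,
      ⟨htree, ?_, hconn, ?_, ?_⟩, ?_⟩
    · intro e he'
      exact hcov e (by rw [he]; exact Finset.mem_union_left _ he')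
    · intro u s hs
      rw [Finset.mem_image] at hs
      obtain ⟨t, ht, rfl⟩ := hs
      exact (hgood t (hsubE u ht)).1
    · intro u v hv
      obtain ⟨t, ht, hvt⟩ := Finset.mem_biUnion.1 (hbag u hv)
      exact Finset.mem_biUnion.2
        ⟨g t, Finset.mem_image_of_mem g ht, (hgood t (hsubE u ht)).2 hvt⟩
    · intro u
      exact (Finset.card_image_le).trans (hDw' u)
end
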